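/- arXiv:1307.6348 — 6 statements merged into one kernel-verified Lean document; each statement's English description precedes it below -/
import Mathlib

section
/- There exists a polynomial p : ℕ → ℕ such that for every finite alphabet Σ there is a function learner mapping each finite nonempty set of unordered words over Σ to a DME over Σ with: (soundness) for every finite nonempty set D of unordered words over Σ, D ⊆ L(learner(D)); and (completeness) for every DME E over Σ there exists a finite set CS_E ⊆ L(E) with |CS_E| ≤ p(|Σ|) such that for every finite set D with CS_E ⊆ D ⊆ L(E), L(learner(D)) = L(E). -/
namespace LSXML

/-- A multiplicity: one of `*`, `+`, `?`, `1`, `0`. -/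
inductive Mult : Type
  | star | plus | opt | one | zero
  deriving DecidableEq

/-- The set of natural numbers `⟦M⟧` denoted by a multiplicity `M`. -/
def Mult.sem : Mult → Set ℕ
  | .star => Set.univ
  | .plus => {n | 1 ≤ n}
  | .opt  => {0, 1}
  | .one  => {1}
  | .zero => {0}

/-- A disjunctive multiplicity expression (DME) `D₁^{M₁} ∥ ⋯ ∥ D_n^{M_n}` where each
`D_i` is a nonempty disjunction `a₁^{M'₁} | ⋯ | a_k^{M'_k}` of symbols with
multiplicities, and every symbol of the alphabet occurs at most once in the
whole expression. -/
structure DME (α : Type) : Type where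
  factors : List (List (α × Mult) × Mult)
  nonemptyDisj : ∀ d ∈ factors, d.1 ≠ []
  distinct : (factors.flatMap fun d => d.1.map Prod.fst).Nodup

/-- `L(a^M) = {a^i : i ∈ ⟦M⟧}`. -/
def atomLang {α : Type} (a : α) (M : Mult) : Set (Multiset α) :=
  {w | ∃ i ∈ Mult.sem M, w = Multiset.replicate i a}

/-- `L(a₁^{M₁} | ⋯ | a_k^{M_k}) = L(a₁^{M₁}) ∪ ⋯ ∪ L(a_k^{M_k})`. -/
def disjLang {α : Type} (d : List (α × Mult)) : Set (Multiset α) :=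
  {w | ∃ p ∈ d, w ∈ atomLang p.1 p.2}

/-- `L(D^M)`: multiset unions of `i` words of `L(D)`, for `i ∈ ⟦M⟧`. -/
def powLang {α : Type} (L : Set (Multiset α)) (M : Mult) : Set (Multiset α) :=
  {w | ∃ ws : List (Multiset α), ws.length ∈ Mult.sem M ∧ (∀ u ∈ ws, u ∈ L) ∧ w = ws.sum}

/-- Unordered concatenation (elementwise multiset union) of a list of languages. -/
def concatLang {α : Type} : List (Set (Multiset α)) → Set (Multiset α)
  | [] => {0}
  | L :: Ls => {w | ∃ u ∈ L, ∃ v ∈ concatLang Ls, w = u + v}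

/-- The language of unordered words of a DME. -/
def DME.lang {α : Type} (E : DME α) : Set (Multiset α) :=
  concatLang (E.factors.map fun d => powLang (disjLang d.1) d.2)

/-- A disjunction-free multiplicity expression `a₁^{M₁} ∥ ⋯ ∥ a_k^{M_k}` with
pairwise distinct symbols. -/
structure MExpr (α : Type) : Type where
  entries : List (α × Mult)
  distinct : (entries.map Prod.fst).Nodup

/-- The language of a disjunction-free multiplicity expression: multisets `w`
with `w(a_i) ∈ ⟦M_i⟧` for each entry `a_i^{M_i}` and `w(b) = 0` for every other
symbol `b`. -/
def MExpr.lang {α : Type} [DecidableEq α] (e : MExpr α) : Set (Multiset α) :=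
  {w | (∀ p ∈ e.entries, w.count p.1 ∈ Mult.sem p.2) ∧
       ∀ b : α, b ∉ e.entries.map Prod.fst → w.count b = 0}

/-- Finite rooted labeled trees. The list of children is to be understood as
unordered: its order is irrelevant for satisfaction of multiplicity schemas. -/
inductive UTree (α : Type) : Type
  | node : α → List (UTree α) → UTree α

/-- The label of the root of a tree. -/
def UTree.label {α : Type} : UTree α → α
  | .node a _ => a

/-- A tree satisfies a family of DME rules if for every node, the multiset of
labels of its children belongs to the language of the rule of its label. -/
inductive UTree.Sat {α : Type} (R : α → DME α) : UTree α → Prop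
  | node (a : α) (ts : List (UTree α)) :
      ((ts.map UTree.label : List α) : Multiset α) ∈ (R a).lang →
      (∀ t ∈ ts, UTree.Sat R t) →
      UTree.Sat R (UTree.node a ts)

/-- A disjunctive multiplicity schema (DMS): a root label together with a
DME rule for every symbol of the alphabet. -/
structure DMS (α : Type) : Type where
  root : α
  rules : α → DME α

/-- The set `L(S)` of trees satisfying a DMS `S`. -/
def DMS.lang {α : Type} (S : DMS α) : Set (UTree α) :=
  {t | t.label = S.root ∧ UTree.Sat S.rules t}

/-- Satisfaction of a family of disjunction-free rules. -/
inductive UTree.MSat {α : Type} [DecidableEq α] (R : α → MExpr α) : UTree α → Prop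
  | node (a : α) (ts : List (UTree α)) :
      ((ts.map UTree.label : List α) : Multiset α) ∈ (R a).lang →
      (∀ t ∈ ts, UTree.MSat R t) →
      UTree.MSat R (UTree.node a ts)

/-- A disjunction-free multiplicity schema (MS). -/
structure MS (α : Type) : Type where
  root : α
  rules : α → MExpr α

/-- The set `L(S)` of trees satisfying an MS `S`. -/
def MS.lang {α : Type} [DecidableEq α] (S : MS α) : Set (UTree α) :=
  {t | t.label = S.root ∧ UTree.MSat S.rules t}


section Learnability

variable {α : Type}

open scoped Classical

/-- The symbols of a disjunction-factor. -/
def fatoms (f : List (α × Mult) × Mult) : List α := f.1.map Prod.fst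

/-- All symbols of a DME. -/
def SymsL (E : DME α) : List α := E.factors.flatMap fatoms

lemma one_mem_sem {m : Mult} (h : m ≠ .zero) : (1 : ℕ) ∈ m.sem := by
  cases m <;> simp [Mult.sem] at * <;> trivial

/-- Arithmetic condition for a word in the language of a starred disjunction. -/
def starCond (d : List (α × Mult)) (w : Multiset α) : Prop :=
  ∀ a ∈ w, ∃ m, (a, m) ∈ d ∧ m ≠ Mult.zero

def oneCond (d : List (α × Mult)) (w : Multiset α) : Prop :=
  ∃ p ∈ d, ∃ c ∈ Mult.sem p.2, w = Multiset.replicate c p.1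

/-- Arithmetic characterization of `powLang (disjLang d) M`. -/
def CondFac (d : List (α × Mult)) : Mult → Multiset α → Prop
  | .zero => fun w => w = 0
  | .one => fun w => oneCond d w
  | .opt => fun w => w = 0 ∨ oneCond d w
  | .star => fun w => starCond d w
  | .plus => fun w => starCond d w ∧ (w ≠ 0 ∨ ∃ p ∈ d, (0:ℕ) ∈ Mult.sem p.2)

lemma mem_sum_of_mem {l : List (Multiset α)} {u : Multiset α} {a : α}
    (ha : a ∈ u) (hu : u ∈ l) : a ∈ l.sum := by
  induction l with
  | nil => simp at hu
  | cons x xs ih =>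
    rw [List.sum_cons, Multiset.mem_add]
    rcases List.mem_cons.mp hu with rfl | hu
    · exact Or.inl ha
    · exact Or.inr (ih hu)

lemma mem_list_sum {l : List (Multiset α)} {a : α} (h : a ∈ l.sum) : ∃ u ∈ l, a ∈ u := by
  induction l with
  | nil => simp at h
  | cons x xs ih =>
    rw [List.sum_cons, Multiset.mem_add] at h
    rcases h with h | h
    · exact ⟨x, List.mem_cons_self, h⟩
    · obtain ⟨u, hu, ha⟩ := ih h
      exact ⟨u, List.mem_cons_of_mem _ hu, ha⟩

lemma starCond_of_all {d : List (α × Mult)} {ws : List (Multiset α)}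
    (h : ∀ u ∈ ws, u ∈ disjLang d) : starCond d ws.sum := by
  intro a ha
  obtain ⟨u, hu, hau⟩ := mem_list_sum ha
  obtain ⟨p, hp, i, hi, rfl⟩ := h u hu
  rw [Multiset.eq_of_mem_replicate hau]
  refine ⟨p.2, by simpa using hp, ?_⟩
  intro hz
  rw [hz] at hi
  simp only [Mult.sem, Set.mem_singleton_iff] at hi
  subst hi
  simp [Multiset.replicate_zero] at hau

lemma sum_eq_zero_elem {l : List (Multiset α)} (h : l.sum = 0) {u : Multiset α} (hu : u ∈ l) :
    u = 0 := by
  rw [Multiset.eq_zero_iff_forall_notMem]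
  intro a ha
  have : a ∈ l.sum := mem_sum_of_mem ha hu
  rw [h] at this
  simp at this

/-- Build a decomposition witnessing `starCond`. -/
lemma star_build {d : List (α × Mult)} {w : Multiset α} (h : starCond d w) :
    ∃ ws : List (Multiset α), (∀ u ∈ ws, u ∈ disjLang d) ∧ ws.sum = w ∧ (w ≠ 0 → ws ≠ []) := by
  induction w using Multiset.induction_on with
  | empty => exact ⟨[], by simp, by simp, by simp⟩
  | cons a t ih =>
    obtain ⟨ws, hws, hsum, _⟩ := ih (fun x hx => h x (Multiset.mem_cons_of_mem hx))
    obtain ⟨m, hm, hm0⟩ := h a (Multiset.mem_cons_self a t)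
    refine ⟨Multiset.replicate 1 a :: ws, ?_, ?_, by simp⟩
    · intro u hu
      rcases List.mem_cons.mp hu with rfl | hu
      · exact ⟨(a, m), hm, 1, one_mem_sem hm0, rfl⟩
      · exact hws u hu
    · rw [List.sum_cons, hsum]
      simp [Multiset.replicate_one]

theorem pow_iff {d : List (α × Mult)} {M : Mult} {w : Multiset α} :
    w ∈ powLang (disjLang d) M ↔ CondFac d M w := by
  constructor
  · rintro ⟨ws, hlen, hmem, rfl⟩
    cases M with
    | zero =>
      simp only [Mult.sem, Set.mem_singleton_iff] at hlen
      rw [List.length_eq_zero_iff] at hlen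
      simp [CondFac, hlen]
    | one =>
      simp only [Mult.sem, Set.mem_singleton_iff] at hlen
      obtain ⟨u, rfl⟩ := List.length_eq_one_iff.mp hlen
      obtain ⟨p, hp, i, hi, rfl⟩ := hmem u (by simp)
      exact ⟨p, hp, i, hi, by simp⟩
    | opt =>
      simp only [Mult.sem, Set.mem_insert_iff, Set.mem_singleton_iff] at hlen
      rcases hlen with h0 | h1
      · rw [List.length_eq_zero_iff] at h0; subst h0; exact Or.inl (by simp)
      · obtain ⟨u, rfl⟩ := List.length_eq_one_iff.mp h1
        obtain ⟨p, hp, i, hi, rfl⟩ := hmem u (by simp)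
        exact Or.inr ⟨p, hp, i, hi, by simp⟩
    | star => exact starCond_of_all hmem
    | plus =>
      refine ⟨starCond_of_all hmem, ?_⟩
      by_cases hz : ws.sum = 0
      · right
        simp only [Mult.sem, Set.mem_setOf_eq] at hlen
        obtain ⟨u, hu⟩ := List.exists_mem_of_length_pos hlen
        obtain ⟨p, hp, i, hi, hrep⟩ := hmem u hu
        have hu0 : u = 0 := sum_eq_zero_elem hz hu
        rw [hu0] at hrep
        have hi0 : i = 0 := by
          have := congrArg Multiset.card hrep
          simpa using this.symm
        exact ⟨p, hp, by rw [hi0] at hi; exact hi⟩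
      · exact Or.inl hz
  · intro hc
    cases M with
    | zero =>
      simp only [CondFac] at hc
      exact ⟨[], by simp [Mult.sem], by simp, by simp [hc]⟩
    | one =>
      obtain ⟨p, hp, c, hc', rfl⟩ := hc
      refine ⟨[Multiset.replicate c p.1], by simp [Mult.sem], ?_, by simp⟩
      intro u hu
      rw [List.mem_singleton] at hu
      subst hu
      exact ⟨p, hp, c, hc', rfl⟩
    | opt =>
      rcases hc with rfl | ⟨p, hp, c, hc', rfl⟩
      · exact ⟨[], by simp [Mult.sem], by simp, by simp⟩
      · refine ⟨[Multiset.replicate c p.1], by simp [Mult.sem], ?_, by simp⟩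
        intro u hu
        rw [List.mem_singleton] at hu
        subst hu
        exact ⟨p, hp, c, hc', rfl⟩
    | star =>
      obtain ⟨ws, h1, h2, _⟩ := star_build hc
      exact ⟨ws, by simp [Mult.sem], h1, h2.symm⟩
    | plus =>
      obtain ⟨hs, hz⟩ := hc
      rcases hz with hz | ⟨p, hp, h0⟩
      · obtain ⟨ws, h1, h2, h3⟩ := star_build hs
        refine ⟨ws, ?_, h1, h2.symm⟩
        simp only [Mult.sem, Set.mem_setOf_eq]
        exact List.length_pos_iff.mpr (h3 hz)
      · obtain ⟨ws, h1, h2, _⟩ := star_build hs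
        by_cases hne : ws = []
        · subst hne
          refine ⟨[Multiset.replicate 0 p.1], by simp [Mult.sem], ?_, by simp at h2; simp [h2]⟩
          intro u hu
          rw [List.mem_singleton] at hu
          subst hu
          exact ⟨p, hp, 0, h0, rfl⟩
        · exact ⟨ws, (List.length_pos_iff.mpr hne : 0 < ws.length), h1, h2.symm⟩

end Learnability
section Learnability2

variable {α : Type}

open scoped Classical

lemma condFac_supp {d : List (α × Mult)} {M : Mult} {w : Multiset α}
    (h : CondFac d M w) {a : α} (ha : a ∈ w) : a ∈ d.map Prod.fst := by
  cases M with
  | zero => simp only [CondFac] at h; subst h; simp at ha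
  | star => obtain ⟨m, hm, _⟩ := h a ha; exact List.mem_map.mpr ⟨(a, m), hm, rfl⟩
  | plus => obtain ⟨m, hm, _⟩ := h.1 a ha; exact List.mem_map.mpr ⟨(a, m), hm, rfl⟩
  | one =>
    obtain ⟨p, hp, c, _, rfl⟩ := h
    rw [Multiset.eq_of_mem_replicate ha]
    exact List.mem_map.mpr ⟨p, hp, rfl⟩
  | opt =>
    rcases h with rfl | ⟨p, hp, c, _, rfl⟩
    · simp at ha
    · rw [Multiset.eq_of_mem_replicate ha]
      exact List.mem_map.mpr ⟨p, hp, rfl⟩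

theorem concat_iff (fs : List (List (α × Mult) × Mult))
    (hnd : (fs.flatMap fatoms).Nodup) (w : Multiset α) :
    w ∈ concatLang (fs.map fun d => powLang (disjLang d.1) d.2) ↔
      ((∀ a ∈ w, ∃ f ∈ fs, a ∈ fatoms f) ∧
        ∀ f ∈ fs, CondFac f.1 f.2 (w.filter (· ∈ fatoms f))) := by
  induction fs generalizing w with
  | nil =>
    simp only [List.map_nil, concatLang, Set.mem_singleton_iff]
    constructor
    · rintro rfl
      exact ⟨by simp, by simp⟩
    · rintro ⟨h1, _⟩
      rw [Multiset.eq_zero_iff_forall_notMem]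
      intro a ha
      obtain ⟨f, hf, _⟩ := h1 a ha
      simp at hf
    | cons f fs ih =>
      rw [List.flatMap_cons, List.nodup_append'] at hnd
      obtain ⟨hnd1, hnd2, hdisj⟩ := hnd
      constructor
      · rintro ⟨u, hu, v, hv, rfl⟩
        have husupp : ∀ a ∈ u, a ∈ fatoms f := fun a ha =>
          condFac_supp (pow_iff.mp hu) ha
        obtain ⟨hv1, hv2⟩ := (ih hnd2 v).mp hv
        have hvsupp : ∀ a ∈ v, a ∉ fatoms f := by
          intro a ha hafat
          obtain ⟨g, hg, hag⟩ := hv1 a ha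
          exact hdisj hafat (List.mem_flatMap.mpr ⟨g, hg, hag⟩)
        constructor
        · intro a ha
          rcases Multiset.mem_add.mp ha with ha | ha
          · exact ⟨f, List.mem_cons_self, husupp a ha⟩
          · obtain ⟨g, hg, hag⟩ := hv1 a ha
            exact ⟨g, List.mem_cons_of_mem _ hg, hag⟩
        · intro g hg
          rcases List.mem_cons.mp hg with rfl | hg
          · have : (u + v).filter (· ∈ fatoms g) = u := by
              rw [Multiset.filter_add]
              rw [Multiset.filter_eq_self.mpr husupp,
                Multiset.filter_eq_nil.mpr hvsupp, add_zero]
            rw [this]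
            exact pow_iff.mp hu
          · have : (u + v).filter (· ∈ fatoms g) = v.filter (· ∈ fatoms g) := by
              rw [Multiset.filter_add]
              have hu0 : u.filter (· ∈ fatoms g) = 0 := by
                rw [Multiset.filter_eq_nil]
                intro a ha hag
                exact hdisj (husupp a ha) (List.mem_flatMap.mpr ⟨g, hg, hag⟩)
              rw [hu0, zero_add]
            rw [this]
            exact hv2 g hg
      · rintro ⟨h1, h2⟩
        refine ⟨w.filter (· ∈ fatoms f), ?_, w.filter (fun a => a ∉ fatoms f), ?_, ?_⟩
        · exact pow_iff.mpr (h2 f (List.mem_cons_self))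
        · rw [ih hnd2]
          constructor
          · intro a ha
            have := Multiset.mem_filter.mp ha
            obtain ⟨g, hg, hag⟩ := h1 a this.1
            rcases List.mem_cons.mp hg with rfl | hg
            · exact absurd hag this.2
            · exact ⟨g, hg, hag⟩
          · intro g hg
            have heq : (w.filter (fun a => a ∉ fatoms f)).filter (· ∈ fatoms g)
                = w.filter (· ∈ fatoms g) := by
              rw [Multiset.filter_filter]
              apply Multiset.filter_congr
              intro a _
              constructor
              · rintro ⟨h, _⟩; exact h
              · intro hag
                refine ⟨hag, fun haf => ?_⟩
                exact hdisj haf (List.mem_flatMap.mpr ⟨g, hg, hag⟩)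
            rw [heq]
            exact h2 g (List.mem_cons_of_mem _ hg)
        · rw [Multiset.filter_add_not]

theorem mem_lang_iff (E : DME α) (w : Multiset α) :
    w ∈ E.lang ↔
      ((∀ a ∈ w, ∃ f ∈ E.factors, a ∈ fatoms f) ∧
        ∀ f ∈ E.factors, CondFac f.1 f.2 (w.filter (· ∈ fatoms f))) :=
  concat_iff E.factors E.distinct w

end Learnability2
section Learnability3

variable {α : Type}

open scoped Classical

/-- A symbol `a` can appear in some word of `L(E)`. -/
def appE (E : DME α) (a : α) : Prop :=
  ∃ f ∈ E.factors, f.2 ≠ Mult.zero ∧ ∃ m, (a, m) ∈ f.1 ∧ m ≠ Mult.zero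

/-- A factor is mandatory: every word must contain one of its symbols. -/
def mandF (f : List (α × Mult) × Mult) : Prop :=
  (f.2 = Mult.one ∨ f.2 = Mult.plus) ∧ ∀ p ∈ f.1, (0:ℕ) ∉ Mult.sem p.2

/-- A symbol can appear with multiplicity 2 in some word of `L(E)`. -/
def twoAllowed (E : DME α) (a : α) : Prop :=
  ∃ f ∈ E.factors, f.2 ≠ Mult.zero ∧ ∃ m, (a, m) ∈ f.1 ∧ m ≠ Mult.zero ∧
    (f.2 = Mult.star ∨ f.2 = Mult.plus ∨ m = Mult.plus ∨ m = Mult.star)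

/-- Two distinct symbols can occur together in some word of `L(E)`. -/
def cooc (E : DME α) (a b : α) : Prop :=
  appE E a ∧ appE E b ∧
    ∀ f ∈ E.factors, a ∈ fatoms f → b ∈ fatoms f → (f.2 = Mult.star ∨ f.2 = Mult.plus)

/-- In a DME, each symbol belongs to at most one factor. -/
lemma unique_fac {fs : List (List (α × Mult) × Mult)}
    (hnd : (fs.flatMap fatoms).Nodup) {a : α} {f g : List (α × Mult) × Mult}
    (hf : f ∈ fs) (hg : g ∈ fs) (haf : a ∈ fatoms f) (hag : a ∈ fatoms g) : f = g := by
  induction fs with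
  | nil => simp at hf
  | cons x xs ih =>
    rw [List.flatMap_cons, List.nodup_append'] at hnd
    obtain ⟨_, hnd2, hdisj⟩ := hnd
    rcases List.mem_cons.mp hf with rfl | hf'
    · rcases List.mem_cons.mp hg with rfl | hg'
      · rfl
      · exact absurd (List.mem_flatMap.mpr ⟨g, hg', hag⟩) (hdisj haf)
    · rcases List.mem_cons.mp hg with rfl | hg'
      · exact absurd (List.mem_flatMap.mpr ⟨f, hf', haf⟩) (hdisj hag)
      · exact ih hnd2 hf' hg'

lemma fac_nodup {fs : List (List (α × Mult) × Mult)}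
    (hnd : (fs.flatMap fatoms).Nodup) {f : List (α × Mult) × Mult}
    (hf : f ∈ fs) : (fatoms f).Nodup := by
  induction fs with
  | nil => simp at hf
  | cons x xs ih =>
    rw [List.flatMap_cons, List.nodup_append] at hnd
    rcases List.mem_cons.mp hf with rfl | hf
    · exact hnd.1
    · exact ih hnd.2.1 hf

/-- The multiplicity of a symbol within a factor is unique. -/
lemma atom_mult_unique {f : List (α × Mult) × Mult} (hnd : (fatoms f).Nodup)
    {a : α} {m₁ m₂ : Mult} (h1 : (a, m₁) ∈ f.1) (h2 : (a, m₂) ∈ f.1) : m₁ = m₂ := by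
  have := List.inj_on_of_nodup_map (hnd : (f.1.map Prod.fst).Nodup)
  have := this h1 h2 rfl
  exact congrArg Prod.snd this

lemma mem_fatoms_iff {f : List (α × Mult) × Mult} {a : α} :
    a ∈ fatoms f ↔ ∃ m, (a, m) ∈ f.1 := by
  constructor
  · intro h
    obtain ⟨p, hp, hpa⟩ := List.mem_map.mp h
    exact ⟨p.2, by rwa [show (a, p.2) = p from by rw [← hpa]]⟩
  · rintro ⟨m, hm⟩
    exact List.mem_map.mpr ⟨(a, m), hm, rfl⟩

lemma appE_mem_SymsL {E : DME α} {a : α} (h : appE E a) : a ∈ SymsL E := by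
  obtain ⟨f, hf, _, m, hm, _⟩ := h
  exact List.mem_flatMap.mpr ⟨f, hf, mem_fatoms_iff.mpr ⟨m, hm⟩⟩

/-- Extraction: every symbol of a word of the language can appear. -/
lemma X1 {E : DME α} {w : Multiset α} (hw : w ∈ E.lang) {a : α} (ha : a ∈ w) :
    appE E a := by
  obtain ⟨h1, h2⟩ := (mem_lang_iff E w).mp hw
  obtain ⟨f, hf, haf⟩ := h1 a ha
  have hmem : a ∈ w.filter (· ∈ fatoms f) := Multiset.mem_filter.mpr ⟨ha, haf⟩
  have hc := h2 f hf
  refine ⟨f, hf, ?_⟩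
  cases hM : f.2 with
  | zero => rw [hM] at hc; simp only [CondFac] at hc; rw [hc] at hmem; simp at hmem
  | star =>
    rw [hM] at hc
    obtain ⟨m, hm, hm0⟩ := hc a hmem
    exact ⟨by simp, m, hm, hm0⟩
  | plus =>
    rw [hM] at hc
    obtain ⟨m, hm, hm0⟩ := hc.1 a hmem
    exact ⟨by simp, m, hm, hm0⟩
  | one =>
    rw [hM] at hc
    obtain ⟨p, hp, c, hcs, heq⟩ := hc
    rw [heq] at hmem
    have hap : a = p.1 := Multiset.eq_of_mem_replicate hmem
    have hc0 : c ≠ 0 := by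
      rintro rfl
      simp [Multiset.replicate_zero] at hmem
    refine ⟨by simp, p.2, by rw [hap]; exact hp, ?_⟩
    rintro hz
    rw [hz] at hcs
    simp only [Mult.sem, Set.mem_singleton_iff] at hcs
    exact hc0 hcs
  | opt =>
    rw [hM] at hc
    rcases hc with h0 | ⟨p, hp, c, hcs, heq⟩
    · rw [h0] at hmem; simp at hmem
    · rw [heq] at hmem
      have hap : a = p.1 := Multiset.eq_of_mem_replicate hmem
      have hc0 : c ≠ 0 := by
        rintro rfl
        simp [Multiset.replicate_zero] at hmem
      refine ⟨by simp, p.2, by rw [hap]; exact hp, ?_⟩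
      rintro hz
      rw [hz] at hcs
      simp only [Mult.sem, Set.mem_singleton_iff] at hcs
      exact hc0 hcs

/-- Extraction: a symbol occurring at least twice. -/
lemma X2 {E : DME α} {w : Multiset α} (hw : w ∈ E.lang) {a : α} (ha : 2 ≤ w.count a) :
    twoAllowed E a := by
  have hamem : a ∈ w := Multiset.count_pos.mp (by omega)
  obtain ⟨h1, h2⟩ := (mem_lang_iff E w).mp hw
  obtain ⟨f, hf, haf⟩ := h1 a hamem
  have hcount : (w.filter (· ∈ fatoms f)).count a = w.count a := by
    rw [Multiset.count_filter]
    simp [haf]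
  have hc := h2 f hf
  have hmem : a ∈ w.filter (· ∈ fatoms f) := Multiset.mem_filter.mpr ⟨hamem, haf⟩
  obtain ⟨g, hg, hg2, m, hgm, hgm0⟩ := X1 hw hamem
  have hfg : f = g := unique_fac E.distinct hf hg haf (mem_fatoms_iff.mpr ⟨m, hgm⟩)
  subst hfg
  cases hM : f.2 with
  | zero => exact absurd hM hg2
  | star => exact ⟨f, hf, hg2, m, hgm, hgm0, Or.inl hM⟩
  | plus => exact ⟨f, hf, hg2, m, hgm, hgm0, Or.inr (Or.inl hM)⟩
  | one =>
    rw [hM] at hc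
    obtain ⟨p, hp, c, hcs, heq⟩ := hc
    have hap : a = p.1 := Multiset.eq_of_mem_replicate (by rw [← heq]; exact hmem)
    have hcge : 2 ≤ c := by
      have := hcount
      rw [heq] at this
      rw [Multiset.count_replicate] at this
      rw [← hap] at this
      simp at this
      omega
    have hm2 : p.2 = Mult.plus ∨ p.2 = Mult.star := by
      cases hp2 : p.2 <;> rw [hp2] at hcs <;>
        simp only [Mult.sem, Set.mem_singleton_iff, Set.mem_insert_iff,
          Set.mem_setOf_eq, Set.mem_univ] at hcs <;> first | omega | simp
    have hmp : m = p.2 := atom_mult_unique (fac_nodup E.distinct hf) hgm (by rw [hap]; exact hp)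
    refine ⟨f, hf, hg2, m, hgm, hgm0, ?_⟩
    rw [hmp]
    rcases hm2 with h | h
    · exact Or.inr (Or.inr (Or.inl h))
    · exact Or.inr (Or.inr (Or.inr h))
  | opt =>
    rw [hM] at hc
    rcases hc with h0 | ⟨p, hp, c, hcs, heq⟩
    · rw [h0] at hmem; simp at hmem
    · have hap : a = p.1 := Multiset.eq_of_mem_replicate (by rw [← heq]; exact hmem)
      have hcge : 2 ≤ c := by
        have := hcount
        rw [heq] at this
        rw [Multiset.count_replicate] at this
        rw [← hap] at this
        simp at this
        omega
      have hm2 : p.2 = Mult.plus ∨ p.2 = Mult.star := by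
        cases hp2 : p.2 <;> rw [hp2] at hcs <;>
          simp only [Mult.sem, Set.mem_singleton_iff, Set.mem_insert_iff,
            Set.mem_setOf_eq, Set.mem_univ] at hcs <;> first | omega | simp
      have hmp : m = p.2 := atom_mult_unique (fac_nodup E.distinct hf) hgm (by rw [hap]; exact hp)
      refine ⟨f, hf, hg2, m, hgm, hgm0, ?_⟩
      rw [hmp]
      rcases hm2 with h | h
      · exact Or.inr (Or.inr (Or.inl h))
      · exact Or.inr (Or.inr (Or.inr h))

/-- Extraction: two distinct symbols occurring together. -/
lemma X3 {E : DME α} {w : Multiset α} (hw : w ∈ E.lang) {a b : α} (hab : a ≠ b)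
    (ha : a ∈ w) (hb : b ∈ w) : cooc E a b := by
  refine ⟨X1 hw ha, X1 hw hb, ?_⟩
  intro f hf haf hbf
  obtain ⟨_, h2⟩ := (mem_lang_iff E w).mp hw
  have hc := h2 f hf
  have hma : a ∈ w.filter (· ∈ fatoms f) := Multiset.mem_filter.mpr ⟨ha, haf⟩
  have hmb : b ∈ w.filter (· ∈ fatoms f) := Multiset.mem_filter.mpr ⟨hb, hbf⟩
  cases hM : f.2 with
  | star => exact Or.inl rfl
  | plus => exact Or.inr rfl
  | zero =>
    rw [hM] at hc; simp only [CondFac] at hc; rw [hc] at hma; simp at hma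
  | one =>
    rw [hM] at hc
    obtain ⟨p, _, c, _, heq⟩ := hc
    rw [heq] at hma hmb
    exact absurd ((Multiset.eq_of_mem_replicate hma).trans
      (Multiset.eq_of_mem_replicate hmb).symm) hab
  | opt =>
    rw [hM] at hc
    rcases hc with h0 | ⟨p, _, c, _, heq⟩
    · rw [h0] at hma; simp at hma
    · rw [heq] at hma hmb
      exact absurd ((Multiset.eq_of_mem_replicate hma).trans
        (Multiset.eq_of_mem_replicate hmb).symm) hab

/-- Extraction: every word hits every mandatory factor. -/
lemma X4 {E : DME α} {w : Multiset α} (hw : w ∈ E.lang) {f : List (α × Mult) × Mult}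
    (hf : f ∈ E.factors) (hm : mandF f) : ∃ x ∈ w, x ∈ fatoms f := by
  obtain ⟨_, h2⟩ := (mem_lang_iff E w).mp hw
  have hc := h2 f hf
  obtain ⟨hM, h0⟩ := hm
  have key : w.filter (· ∈ fatoms f) ≠ 0 := by
    rcases hM with hM | hM
    · rw [hM] at hc
      obtain ⟨p, hp, c, hcs, heq⟩ := hc
      have hc1 : c ≠ 0 := by
        rintro rfl
        exact h0 p hp hcs
      rw [heq]
      intro h
      have := congrArg Multiset.card h
      simp at this
      exact hc1 this
    · rw [hM] at hc
      rcases hc.2 with h | ⟨p, hp, hps⟩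
      · exact h
      · exact absurd hps (h0 p hp)
  obtain ⟨x, hx⟩ := Multiset.exists_mem_of_ne_zero key
  have := Multiset.mem_filter.mp hx
  exact ⟨x, this.1, this.2⟩

end Learnability3
section Learnability4

variable {α : Type}

open scoped Classical

/-- The first symbol of a factor, as a multiset (a singleton for factors of a DME). -/
def firstSym (f : List (α × Mult) × Mult) : Multiset α := ((fatoms f).take 1 : List α)

lemma firstSym_subset {f : List (α × Mult) × Mult} {x : α} (h : x ∈ firstSym f) :
    x ∈ fatoms f := by
  have : x ∈ (fatoms f).take 1 := by exact_mod_cast h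
  exact List.mem_of_mem_take this

lemma firstSym_eq_of_ne {f : List (α × Mult) × Mult} (h : f.1 ≠ []) :
    ∃ a, firstSym f = {a} ∧ a ∈ fatoms f := by
  obtain ⟨p, l, hl⟩ := List.exists_cons_of_ne_nil h
  refine ⟨p.1, ?_, ?_⟩
  · simp [firstSym, fatoms, hl]
  · simp [fatoms, hl]

lemma firstSym_mem_sub {f : List (α × Mult) × Mult} (h : f.1 ≠ []) {x y : α}
    (hx : x ∈ firstSym f) (hy : y ∈ firstSym f) : x = y := by
  obtain ⟨a, ha, _⟩ := firstSym_eq_of_ne h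
  rw [ha] at hx hy
  rw [Multiset.mem_singleton] at hx hy
  rw [hx, hy]

/-- The base word: the first symbol of each mandatory factor. -/
noncomputable def baseW (E : DME α) : Multiset α :=
  (E.factors.map fun f => if mandF f then firstSym f else 0).sum

/-- Single-deviation word: `a` plus the defaults of all other mandatory factors. -/
noncomputable def devW (E : DME α) (a : α) : Multiset α :=
  a ::ₘ (E.factors.map fun f => if mandF f ∧ a ∉ fatoms f then firstSym f else 0).sum

/-- Double occurrence word. -/
noncomputable def dev2W (E : DME α) (a : α) : Multiset α :=
  a ::ₘ devW E a

/-- Pair word: `a`, `b` plus the defaults of all other mandatory factors. -/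
noncomputable def pairW (E : DME α) (a b : α) : Multiset α :=
  a ::ₘ b ::ₘ (E.factors.map fun f =>
    if mandF f ∧ a ∉ fatoms f ∧ b ∉ fatoms f then firstSym f else 0).sum

lemma mem_map_sum {fs : List (List (α × Mult) × Mult)} {u : (List (α × Mult) × Mult) → Multiset α}
    {x : α} (h : x ∈ (fs.map u).sum) : ∃ f ∈ fs, x ∈ u f := by
  obtain ⟨v, hv, hxv⟩ := mem_list_sum h
  obtain ⟨f, hf, rfl⟩ := List.mem_map.mp hv
  exact ⟨f, hf, hxv⟩

/-- Generic membership constructor for DME languages. -/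
lemma sum_mem_lang (E : DME α) (u : (List (α × Mult) × Mult) → Multiset α)
    (h : ∀ f ∈ E.factors, u f ∈ powLang (disjLang f.1) f.2) :
    (E.factors.map u).sum ∈ E.lang := by
  show _ ∈ concatLang _
  have : ∀ (fs : List (List (α × Mult) × Mult)), (∀ f ∈ fs, u f ∈ powLang (disjLang f.1) f.2) →
      (fs.map u).sum ∈ concatLang (fs.map fun d => powLang (disjLang d.1) d.2) := by
    intro fs
    induction fs with
    | nil => intro _; simp [concatLang]
    | cons f fs ih =>
      intro hall
      refine ⟨u f, hall f (List.mem_cons_self), (fs.map u).sum,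
        ih (fun g hg => hall g (List.mem_cons_of_mem _ hg)), ?_⟩
      simp
  exact this E.factors h

/-- The part contributed by a non-mandatory factor: the empty word is available. -/
lemma zero_mem_pow {f : List (α × Mult) × Mult} (hne : f.1 ≠ []) (h : ¬ mandF f) :
    (0 : Multiset α) ∈ powLang (disjLang f.1) f.2 := by
  rw [pow_iff]
  by_cases hz : ∃ p ∈ f.1, (0:ℕ) ∈ Mult.sem p.2
  · obtain ⟨p, hp, hp0⟩ := hz
    cases hM : f.2 with
    | zero => simp [CondFac]
    | star => intro a ha; simp at ha
    | opt => exact Or.inl rfl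
    | one => exact ⟨p, hp, 0, hp0, by simp⟩
    | plus => exact ⟨by intro a ha; simp at ha, Or.inr ⟨p, hp, hp0⟩⟩
  · push_neg at hz
    have hM : ¬(f.2 = Mult.one ∨ f.2 = Mult.plus) := by
      intro hM
      exact h ⟨hM, fun p hp => hz p hp⟩
    cases hMv : f.2 with
    | one => rw [hMv] at hM; simp at hM
    | plus => rw [hMv] at hM; simp at hM
    | zero => simp [CondFac]
    | star => intro a ha; simp at ha
    | opt => exact Or.inl rfl

/-- The part contributed by a mandatory factor. -/
lemma firstSym_mem_pow {f : List (α × Mult) × Mult} (hne : f.1 ≠ [])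
    (hnd : (fatoms f).Nodup) (h : mandF f) :
    firstSym f ∈ powLang (disjLang f.1) f.2 := by
  obtain ⟨p, l, hl⟩ := List.exists_cons_of_ne_nil hne
  have hfs : firstSym f = Multiset.replicate 1 p.1 := by
    simp [firstSym, fatoms, hl, Multiset.replicate_one]
  have hp : p ∈ f.1 := by rw [hl]; exact List.mem_cons_self
  have hm0 : p.2 ≠ Mult.zero := by
    intro hz
    have := h.2 p hp
    rw [hz] at this
    simp [Mult.sem] at this
  refine ⟨[Multiset.replicate 1 p.1], ?_, ?_, by simp [hfs]⟩
  · rcases h.1 with hM | hM <;> simp [hM, Mult.sem]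
  · intro u hu
    rw [List.mem_singleton] at hu
    subst hu
    exact ⟨p, hp, 1, one_mem_sem hm0, rfl⟩

lemma replicate_mem_pow {f : List (α × Mult) × Mult} {a : α} {m : Mult}
    (hm : (a, m) ∈ f.1) (hm0 : m ≠ Mult.zero) (hf0 : f.2 ≠ Mult.zero) :
    Multiset.replicate 1 a ∈ powLang (disjLang f.1) f.2 := by
  refine ⟨[Multiset.replicate 1 a], by simpa [Mult.sem] using one_mem_sem hf0, ?_, by simp⟩
  intro u hu
  rw [List.mem_singleton] at hu
  subst hu
  exact ⟨(a, m), hm, 1, one_mem_sem hm0, rfl⟩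

lemma replicate2_mem_pow {f : List (α × Mult) × Mult} {a : α} {m : Mult}
    (hm : (a, m) ∈ f.1) (hm0 : m ≠ Mult.zero) (hf0 : f.2 ≠ Mult.zero)
    (h2 : f.2 = Mult.star ∨ f.2 = Mult.plus ∨ m = Mult.plus ∨ m = Mult.star) :
    Multiset.replicate 2 a ∈ powLang (disjLang f.1) f.2 := by
  rcases h2 with hM | hM | hM | hM
  · refine ⟨[Multiset.replicate 1 a, Multiset.replicate 1 a], by simp [hM, Mult.sem], ?_, ?_⟩
    · intro u hu
      have : u = Multiset.replicate 1 a := by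
        rcases List.mem_cons.mp hu with rfl | hu
        · rfl
        · rw [List.mem_singleton] at hu; exact hu
      subst this
      exact ⟨(a, m), hm, 1, one_mem_sem hm0, rfl⟩
    · show _ = _ + (_ + 0)
      rw [add_zero, ← Multiset.replicate_add]
  · refine ⟨[Multiset.replicate 1 a, Multiset.replicate 1 a], by simp [hM, Mult.sem], ?_, ?_⟩
    · intro u hu
      have : u = Multiset.replicate 1 a := by
        rcases List.mem_cons.mp hu with rfl | hu
        · rfl
        · rw [List.mem_singleton] at hu; exact hu
      subst this
      exact ⟨(a, m), hm, 1, one_mem_sem hm0, rfl⟩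
    · show _ = _ + (_ + 0)
      rw [add_zero, ← Multiset.replicate_add]
  · refine ⟨[Multiset.replicate 2 a], by simpa [Mult.sem] using one_mem_sem hf0, ?_, by simp⟩
    intro u hu
    rw [List.mem_singleton] at hu
    subst hu
    exact ⟨(a, m), hm, 2, by simp [hM, Mult.sem], rfl⟩
  · refine ⟨[Multiset.replicate 2 a], by simpa [Mult.sem] using one_mem_sem hf0, ?_, by simp⟩
    intro u hu
    rw [List.mem_singleton] at hu
    subst hu
    exact ⟨(a, m), hm, 2, by simp [hM, Mult.sem], rfl⟩

lemma pair_mem_pow {f : List (α × Mult) × Mult} {a b : α} {ma mb : Mult}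
    (hma : (a, ma) ∈ f.1) (hma0 : ma ≠ Mult.zero) (hmb : (b, mb) ∈ f.1) (hmb0 : mb ≠ Mult.zero)
    (hM : f.2 = Mult.star ∨ f.2 = Mult.plus) :
    (Multiset.replicate 1 a + Multiset.replicate 1 b) ∈ powLang (disjLang f.1) f.2 := by
  refine ⟨[Multiset.replicate 1 a, Multiset.replicate 1 b], ?_, ?_, ?_⟩
  · rcases hM with hM | hM <;> simp [hM, Mult.sem]
  · intro u hu
    rcases List.mem_cons.mp hu with rfl | hu
    · exact ⟨(a, ma), hma, 1, one_mem_sem hma0, rfl⟩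
    · rw [List.mem_singleton] at hu
      subst hu
      exact ⟨(b, mb), hmb, 1, one_mem_sem hmb0, rfl⟩
  · show _ = _ + (_ + 0)
    rw [add_zero]

end Learnability4
section Learnability5

variable {α : Type}

open scoped Classical

lemma sum_if_split {fs : List (List (α × Mult) × Mult)}
    (hnd : (fs.flatMap fatoms).Nodup) {f₀ : List (α × Mult) × Mult} (hf₀ : f₀ ∈ fs)
    {a : α} (ha : a ∈ fatoms f₀) (v : Multiset α)
    (g : (List (α × Mult) × Mult) → Multiset α) :
    (fs.map fun f => if a ∈ fatoms f then v else g f).sum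
      = v + (fs.map fun f => if a ∈ fatoms f then 0 else g f).sum := by
  induction fs with
  | nil => simp at hf₀
  | cons x xs ih =>
    rw [List.flatMap_cons, List.nodup_append'] at hnd
    obtain ⟨_, hnd2, hdisj⟩ := hnd
    rcases List.mem_cons.mp hf₀ with rfl | hf₀'
    · have hax : a ∈ fatoms f₀ := ha
      have htail : ∀ f ∈ xs, a ∉ fatoms f := by
        intro f hf haf
        exact hdisj hax (List.mem_flatMap.mpr ⟨f, hf, haf⟩)
      rw [List.map_cons, List.map_cons, List.sum_cons, List.sum_cons, if_pos hax, if_pos hax]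
      have : (xs.map fun f => if a ∈ fatoms f then v else g f)
          = (xs.map fun f => if a ∈ fatoms f then 0 else g f) := by
        apply List.map_congr_left
        intro f hf
        rw [if_neg (htail f hf), if_neg (htail f hf)]
      rw [this]
      abel
    · have hax : a ∉ fatoms x := by
        intro hax
        exact hdisj hax (List.mem_flatMap.mpr ⟨f₀, hf₀', ha⟩)
      rw [List.map_cons, List.map_cons, List.sum_cons, List.sum_cons, if_neg hax, if_neg hax,
        ih hnd2 hf₀']
      rw [← add_assoc, add_comm (g x) v, add_assoc]

lemma baseW_mem (E : DME α) : baseW E ∈ E.lang := by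
  apply sum_mem_lang
  intro f hf
  by_cases hm : mandF f
  · rw [if_pos hm]
    exact firstSym_mem_pow (E.nonemptyDisj f hf) (fac_nodup E.distinct hf) hm
  · rw [if_neg hm]
    exact zero_mem_pow (E.nonemptyDisj f hf) hm

lemma devW_mem (E : DME α) {a : α} (h : appE E a) : devW E a ∈ E.lang := by
  obtain ⟨f₀, hf₀, hf₀2, m, hm, hm0⟩ := h
  have haf₀ : a ∈ fatoms f₀ := mem_fatoms_iff.mpr ⟨m, hm⟩
  have key : devW E a = (E.factors.map fun f =>
      if a ∈ fatoms f then Multiset.replicate 1 a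
      else if mandF f ∧ a ∉ fatoms f then firstSym f else 0).sum := by
    rw [sum_if_split E.distinct hf₀ haf₀]
    have : (E.factors.map fun f => if a ∈ fatoms f then 0
          else if mandF f ∧ a ∉ fatoms f then firstSym f else 0)
        = (E.factors.map fun f => if mandF f ∧ a ∉ fatoms f then firstSym f else 0) := by
      apply List.map_congr_left
      intro f _
      by_cases haf : a ∈ fatoms f
      · rw [if_pos haf, if_neg (by rintro ⟨_, hn⟩; exact hn haf)]
      · rw [if_neg haf]
    rw [this]
    simp only [devW, Multiset.replicate_one, Multiset.singleton_add, Multiset.cons_add]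
  rw [key]
  apply sum_mem_lang
  intro f hf
  by_cases haf : a ∈ fatoms f
  · rw [if_pos haf]
    have : f = f₀ := unique_fac E.distinct hf hf₀ haf haf₀
    subst this
    exact replicate_mem_pow hm hm0 hf₀2
  · rw [if_neg haf]
    by_cases hmand : mandF f
    · rw [if_pos ⟨hmand, haf⟩]
      exact firstSym_mem_pow (E.nonemptyDisj f hf) (fac_nodup E.distinct hf) hmand
    · rw [if_neg (by rintro ⟨hmand', _⟩; exact hmand hmand')]
      exact zero_mem_pow (E.nonemptyDisj f hf) hmand

lemma dev2W_mem (E : DME α) {a : α} (h : twoAllowed E a) : dev2W E a ∈ E.lang := by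
  obtain ⟨f₀, hf₀, hf₀2, m, hm, hm0, h2⟩ := h
  have haf₀ : a ∈ fatoms f₀ := mem_fatoms_iff.mpr ⟨m, hm⟩
  have key : dev2W E a = (E.factors.map fun f =>
      if a ∈ fatoms f then Multiset.replicate 2 a
      else if mandF f ∧ a ∉ fatoms f then firstSym f else 0).sum := by
    rw [sum_if_split E.distinct hf₀ haf₀]
    have : (E.factors.map fun f => if a ∈ fatoms f then 0
          else if mandF f ∧ a ∉ fatoms f then firstSym f else 0)
        = (E.factors.map fun f => if mandF f ∧ a ∉ fatoms f then firstSym f else 0) := by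
      apply List.map_congr_left
      intro f _
      by_cases haf : a ∈ fatoms f
      · rw [if_pos haf, if_neg (by rintro ⟨_, hn⟩; exact hn haf)]
      · rw [if_neg haf]
    rw [this]
    simp only [dev2W, devW,
      show Multiset.replicate 2 a = a ::ₘ a ::ₘ 0 from rfl,
      Multiset.cons_add, zero_add]
  rw [key]
  apply sum_mem_lang
  intro f hf
  by_cases haf : a ∈ fatoms f
  · rw [if_pos haf]
    have : f = f₀ := unique_fac E.distinct hf hf₀ haf haf₀
    subst this
    exact replicate2_mem_pow hm hm0 hf₀2 h2
  · rw [if_neg haf]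
    by_cases hmand : mandF f
    · rw [if_pos ⟨hmand, haf⟩]
      exact firstSym_mem_pow (E.nonemptyDisj f hf) (fac_nodup E.distinct hf) hmand
    · rw [if_neg (by rintro ⟨hmand', _⟩; exact hmand hmand')]
      exact zero_mem_pow (E.nonemptyDisj f hf) hmand

lemma pairW_mem (E : DME α) {a b : α} (hab : a ≠ b) (h : cooc E a b) :
    pairW E a b ∈ E.lang := by
  obtain ⟨ha, hb, hco⟩ := h
  obtain ⟨f₀, hf₀, hf₀2, ma, hma, hma0⟩ := ha
  obtain ⟨g₀, hg₀, hg₀2, mb, hmb, hmb0⟩ := hb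
  have haf₀ : a ∈ fatoms f₀ := mem_fatoms_iff.mpr ⟨ma, hma⟩
  have hbg₀ : b ∈ fatoms g₀ := mem_fatoms_iff.mpr ⟨mb, hmb⟩
  by_cases hsame : b ∈ fatoms f₀
  · -- same factor: f₀ = g₀, and it is a star/plus factor
    have hgf : g₀ = f₀ := unique_fac E.distinct hg₀ hf₀ hbg₀ hsame
    rw [hgf] at hmb
    have hMsp : f₀.2 = Mult.star ∨ f₀.2 = Mult.plus := hco f₀ hf₀ haf₀ hsame
    have key : pairW E a b = (E.factors.map fun f =>
        if a ∈ fatoms f then Multiset.replicate 1 a + Multiset.replicate 1 b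
        else if mandF f ∧ a ∉ fatoms f ∧ b ∉ fatoms f then firstSym f else 0).sum := by
      rw [sum_if_split E.distinct hf₀ haf₀]
      have : (E.factors.map fun f => if a ∈ fatoms f then 0
            else if mandF f ∧ a ∉ fatoms f ∧ b ∉ fatoms f then firstSym f else 0)
          = (E.factors.map fun f =>
              if mandF f ∧ a ∉ fatoms f ∧ b ∉ fatoms f then firstSym f else 0) := by
        apply List.map_congr_left
        intro f _
        by_cases haf : a ∈ fatoms f
        · rw [if_pos haf, if_neg (by rintro ⟨_, hn, _⟩; exact hn haf)]
        · rw [if_neg haf]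
      rw [this]
      simp only [pairW, Multiset.replicate_one, add_assoc, Multiset.singleton_add, Multiset.cons_add]
    rw [key]
    apply sum_mem_lang
    intro f hf
    by_cases haf : a ∈ fatoms f
    · rw [if_pos haf]
      have heqf : f = f₀ := unique_fac E.distinct hf hf₀ haf haf₀
      rw [heqf]
      exact pair_mem_pow hma hma0 hmb hmb0 hMsp
    · rw [if_neg haf]
      by_cases hmand : mandF f
      · by_cases hbf : b ∈ fatoms f
        · have heqf : f = f₀ := unique_fac E.distinct hf hf₀ hbf hsame
          rw [heqf] at haf
          exact absurd haf₀ haf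
        · rw [if_pos ⟨hmand, haf, hbf⟩]
          exact firstSym_mem_pow (E.nonemptyDisj f hf) (fac_nodup E.distinct hf) hmand
      · rw [if_neg (by rintro ⟨hmand', _⟩; exact hmand hmand')]
        exact zero_mem_pow (E.nonemptyDisj f hf) hmand
  · -- different factors
    have hfg : f₀ ≠ g₀ := fun hEq => hsame (hEq ▸ hbg₀)
    have hag₀ : a ∉ fatoms g₀ := by
      intro hag
      exact hfg (unique_fac E.distinct hf₀ hg₀ haf₀ hag)
    have key : pairW E a b = (E.factors.map fun f =>
        if a ∈ fatoms f then Multiset.replicate 1 a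
        else if b ∈ fatoms f then Multiset.replicate 1 b
        else if mandF f ∧ a ∉ fatoms f ∧ b ∉ fatoms f then firstSym f else 0).sum := by
      rw [sum_if_split E.distinct hf₀ haf₀]
      have e1 : (E.factors.map fun f => if a ∈ fatoms f then 0
            else if b ∈ fatoms f then Multiset.replicate 1 b
            else if mandF f ∧ a ∉ fatoms f ∧ b ∉ fatoms f then firstSym f else 0)
          = (E.factors.map fun f => if b ∈ fatoms f then Multiset.replicate 1 b
            else if a ∈ fatoms f then 0
            else if mandF f ∧ a ∉ fatoms f ∧ b ∉ fatoms f then firstSym f else 0) := by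
        apply List.map_congr_left
        intro f hf
        by_cases haf : a ∈ fatoms f
        · have hbf : b ∉ fatoms f := by
            intro hbf
            have h1 : f = f₀ := unique_fac E.distinct hf hf₀ haf haf₀
            have h2 : f = g₀ := unique_fac E.distinct hf hg₀ hbf hbg₀
            exact hfg (h1 ▸ h2)
          simp [haf, hbf]
        · simp [haf]
      rw [e1, sum_if_split E.distinct hg₀ hbg₀]
      have e2 : (E.factors.map fun f => if b ∈ fatoms f then 0
            else if a ∈ fatoms f then 0
            else if mandF f ∧ a ∉ fatoms f ∧ b ∉ fatoms f then firstSym f else 0)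
          = (E.factors.map fun f =>
              if mandF f ∧ a ∉ fatoms f ∧ b ∉ fatoms f then firstSym f else 0) := by
        apply List.map_congr_left
        intro f _
        by_cases hbf : b ∈ fatoms f
        · simp [hbf]
        · by_cases haf : a ∈ fatoms f
          · simp [hbf, haf]
          · simp [hbf, haf]
      rw [e2]
      simp only [pairW, Multiset.replicate_one, add_assoc, Multiset.singleton_add, Multiset.cons_add]
    rw [key]
    apply sum_mem_lang
    intro f hf
    by_cases haf : a ∈ fatoms f
    · rw [if_pos haf]
      have : f = f₀ := unique_fac E.distinct hf hf₀ haf haf₀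
      subst this
      exact replicate_mem_pow hma hma0 hf₀2
    · rw [if_neg haf]
      by_cases hbf : b ∈ fatoms f
      · rw [if_pos hbf]
        have : f = g₀ := unique_fac E.distinct hf hg₀ hbf hbg₀
        subst this
        exact replicate_mem_pow hmb hmb0 hg₀2
      · rw [if_neg hbf]
        by_cases hmand : mandF f
        · rw [if_pos ⟨hmand, haf, hbf⟩]
          exact firstSym_mem_pow (E.nonemptyDisj f hf) (fac_nodup E.distinct hf) hmand
        · rw [if_neg (by rintro ⟨hmand', _⟩; exact hmand hmand')]
          exact zero_mem_pow (E.nonemptyDisj f hf) hmand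

lemma mem_baseW {E : DME α} {x : α} (h : x ∈ baseW E) :
    ∃ f ∈ E.factors, mandF f ∧ x ∈ firstSym f := by
  obtain ⟨f, hf, hx⟩ := mem_map_sum h
  by_cases hm : mandF f
  · rw [if_pos hm] at hx
    exact ⟨f, hf, hm, hx⟩
  · rw [if_neg hm] at hx
    simp at hx

lemma mem_devW {E : DME α} {a x : α} (h : x ∈ devW E a) :
    x = a ∨ ∃ f ∈ E.factors, mandF f ∧ a ∉ fatoms f ∧ x ∈ firstSym f := by
  rcases Multiset.mem_cons.mp h with rfl | h
  · exact Or.inl rfl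
  · obtain ⟨f, hf, hx⟩ := mem_map_sum h
    by_cases hm : mandF f ∧ a ∉ fatoms f
    · rw [if_pos hm] at hx
      exact Or.inr ⟨f, hf, hm.1, hm.2, hx⟩
    · rw [if_neg hm] at hx
      simp at hx

end Learnability5
section Learnability6

variable {α : Type}

open scoped Classical

/-- The characteristic sample of a DME. -/
noncomputable def CS (E : DME α) : Finset (Multiset α) :=
  insert (baseW E)
    (((((SymsL E).toFinset.filter (appE E)).image (devW E)) ∪
      (((SymsL E).toFinset.filter (twoAllowed E)).image (dev2W E))) ∪
     ((((SymsL E).toFinset ×ˢ (SymsL E).toFinset).filter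
        fun p => p.1 ≠ p.2 ∧ cooc E p.1 p.2).image fun p => pairW E p.1 p.2))

lemma twoAllowed_mem_SymsL {E : DME α} {a : α} (h : twoAllowed E a) : a ∈ SymsL E := by
  obtain ⟨f, hf, _, m, hm, _⟩ := h
  exact List.mem_flatMap.mpr ⟨f, hf, mem_fatoms_iff.mpr ⟨m, hm⟩⟩

lemma baseW_mem_CS (E : DME α) : baseW E ∈ CS E := Finset.mem_insert_self _ _

lemma devW_mem_CS (E : DME α) {a : α} (h : appE E a) : devW E a ∈ CS E := by
  apply Finset.mem_insert_of_mem
  apply Finset.mem_union_left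
  apply Finset.mem_union_left
  exact Finset.mem_image.mpr ⟨a, Finset.mem_filter.mpr
    ⟨List.mem_toFinset.mpr (appE_mem_SymsL h), h⟩, rfl⟩

lemma dev2W_mem_CS (E : DME α) {a : α} (h : twoAllowed E a) : dev2W E a ∈ CS E := by
  apply Finset.mem_insert_of_mem
  apply Finset.mem_union_left
  apply Finset.mem_union_right
  exact Finset.mem_image.mpr ⟨a, Finset.mem_filter.mpr
    ⟨List.mem_toFinset.mpr (twoAllowed_mem_SymsL h), h⟩, rfl⟩

lemma pairW_mem_CS (E : DME α) {a b : α} (hab : a ≠ b) (h : cooc E a b) :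
    pairW E a b ∈ CS E := by
  apply Finset.mem_insert_of_mem
  apply Finset.mem_union_right
  refine Finset.mem_image.mpr ⟨(a, b), Finset.mem_filter.mpr ⟨?_, hab, h⟩, rfl⟩
  exact Finset.mem_product.mpr ⟨List.mem_toFinset.mpr (appE_mem_SymsL h.1),
    List.mem_toFinset.mpr (appE_mem_SymsL h.2.1)⟩

lemma CS_subset_lang (E : DME α) : ∀ w ∈ CS E, w ∈ E.lang := by
  intro w hw
  rcases Finset.mem_insert.mp hw with rfl | hw
  · exact baseW_mem E
  rcases Finset.mem_union.mp hw with hw | hw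
  · rcases Finset.mem_union.mp hw with hw | hw
    · obtain ⟨a, ha, rfl⟩ := Finset.mem_image.mp hw
      exact devW_mem E (Finset.mem_filter.mp ha).2
    · obtain ⟨a, ha, rfl⟩ := Finset.mem_image.mp hw
      exact dev2W_mem E (Finset.mem_filter.mp ha).2
  · obtain ⟨p, hp, rfl⟩ := Finset.mem_image.mp hw
    obtain ⟨_, hne, hco⟩ := Finset.mem_filter.mp hp
    exact pairW_mem E hne hco

lemma CS_card (E : DME α) [Fintype α] :
    (CS E).card ≤ 1 + 2 * Fintype.card α + Fintype.card α * Fintype.card α := by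
  have hS : (SymsL E).toFinset.card ≤ Fintype.card α := by
    apply Finset.card_le_card (Finset.subset_univ _) |>.trans
    simp
  calc (CS E).card ≤ _ + 1 := Finset.card_insert_le _ _
    _ ≤ 1 + 2 * Fintype.card α + Fintype.card α * Fintype.card α := by
      have h1 := Finset.card_union_le
        ((((SymsL E).toFinset.filter (appE E)).image (devW E)) ∪
          (((SymsL E).toFinset.filter (twoAllowed E)).image (dev2W E)))
        ((((SymsL E).toFinset ×ˢ (SymsL E).toFinset).filter
          fun p => p.1 ≠ p.2 ∧ cooc E p.1 p.2).image fun p => pairW E p.1 p.2)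
      have h2 := Finset.card_union_le
        ((((SymsL E).toFinset.filter (appE E)).image (devW E)))
        ((((SymsL E).toFinset.filter (twoAllowed E)).image (dev2W E)))
      have h3 : ((((SymsL E).toFinset.filter (appE E)).image (devW E))).card
          ≤ Fintype.card α := by
        apply (Finset.card_image_le).trans
        exact (Finset.card_filter_le _ _).trans hS
      have h4 : ((((SymsL E).toFinset.filter (twoAllowed E)).image (dev2W E))).card
          ≤ Fintype.card α := by
        apply (Finset.card_image_le).trans
        exact (Finset.card_filter_le _ _).trans hS
      have h5 : (((((SymsL E).toFinset ×ˢ (SymsL E).toFinset).filter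
            fun p => p.1 ≠ p.2 ∧ cooc E p.1 p.2).image fun p => pairW E p.1 p.2)).card
          ≤ Fintype.card α * Fintype.card α := by
        apply (Finset.card_image_le).trans
        apply (Finset.card_filter_le _ _).trans
        rw [Finset.card_product]
        exact Nat.mul_le_mul hS hS
      omega

end Learnability6
section Learnability7

variable {α : Type}

open scoped Classical

lemma mand_app {E : DME α} {f : List (α × Mult) × Mult} (hf : f ∈ E.factors)
    (hm : mandF f) {b : α} (hb : b ∈ fatoms f) : appE E b := by
  obtain ⟨m, hbm⟩ := mem_fatoms_iff.mp hb
  refine ⟨f, hf, ?_, m, hbm, ?_⟩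
  · rcases hm.1 with h | h <;> rw [h] <;> simp
  · intro hz
    have := hm.2 (b, m) hbm
    rw [hz] at this
    simp [Mult.sem] at this

/-- The key alignment lemma: under mutual consistency of characteristic samples,
every mandatory factor of `E'` contains (symbol-wise) a mandatory factor of `E`. -/
lemma hard_part {E E' : DME α}
    (h1 : ∀ w ∈ CS E, w ∈ E'.lang) (h2 : ∀ w ∈ CS E', w ∈ E.lang)
    {f' : List (α × Mult) × Mult} (hf' : f' ∈ E'.factors) (hm' : mandF f') :
    ∃ f ∈ E.factors, mandF f ∧ ∀ x ∈ fatoms f, x ∈ fatoms f' := by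
  by_contra hgoal
  push_neg at hgoal
  -- hgoal : every mandatory factor of E has a symbol outside f'
  by_cases hcaseI : ∃ f₀ ∈ E.factors, mandF f₀ ∧ ∀ s ∈ fatoms f', s ∈ fatoms f₀
  · -- Case I: the symbols of f' are all contained in a single mandatory factor f₀ of E
    obtain ⟨f₀, hf₀, hm₀, hsub⟩ := hcaseI
    obtain ⟨b, hb, hbf'⟩ := hgoal f₀ hf₀ hm₀
    have happb : appE E b := mand_app hf₀ hm₀ hb
    have hdev : devW E b ∈ E'.lang := h1 _ (devW_mem_CS E happb)
    obtain ⟨x, hx, hxf'⟩ := X4 hdev hf' hm'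
    rcases mem_devW hx with rfl | ⟨g, hg, _, hbg, hxg⟩
    · exact hbf' hxf'
    · have hxg' : x ∈ fatoms g := firstSym_subset hxg
      have : g = f₀ := unique_fac E.distinct hg hf₀ hxg' (hsub x hxf')
      rw [this] at hbg
      exact hbg hb
  · -- Case II: injections between the mandatory factors
    push_neg at hcaseI
    set Fm : Finset (List (α × Mult) × Mult) :=
      ((E.factors : Multiset (List (α × Mult) × Mult)).filter mandF).toFinset with hFm
    set Fm' : Finset (List (α × Mult) × Mult) :=
      ((E'.factors : Multiset (List (α × Mult) × Mult)).filter mandF).toFinset with hFm'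
    have mem_Fm : ∀ {f}, f ∈ Fm ↔ f ∈ E.factors ∧ mandF f := by
      intro f
      rw [hFm, Multiset.mem_toFinset, Multiset.mem_filter]
      simp [And.comm]
    have mem_Fm' : ∀ {f}, f ∈ Fm' ↔ f ∈ E'.factors ∧ mandF f := by
      intro f
      rw [hFm', Multiset.mem_toFinset, Multiset.mem_filter]
      simp [And.comm]
    -- φ : Fm' ↪ Fm  via the base word of E
    have hφex : ∀ g ∈ Fm', ∃ f, (f ∈ E.factors ∧ mandF f) ∧ ∃ x, x ∈ firstSym f ∧ x ∈ fatoms g := by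
      intro g hg
      obtain ⟨hgE, hgm⟩ := mem_Fm'.mp hg
      have hbase : baseW E ∈ E'.lang := h1 _ (baseW_mem_CS E)
      obtain ⟨x, hx, hxg⟩ := X4 hbase hgE hgm
      obtain ⟨f, hf, hfm, hxf⟩ := mem_baseW hx
      exact ⟨f, ⟨hf, hfm⟩, x, hxf, hxg⟩
    classical
    let φ : (List (α × Mult) × Mult) → (List (α × Mult) × Mult) := fun g =>
      if h : ∃ f, (f ∈ E.factors ∧ mandF f) ∧ ∃ x, x ∈ firstSym f ∧ x ∈ fatoms g
      then h.choose else g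
    have hφmem : ∀ g ∈ Fm', φ g ∈ Fm := by
      intro g hg
      have h := hφex g hg
      simp only [φ, dif_pos h]
      exact mem_Fm.mpr h.choose_spec.1
    have hφspec : ∀ g ∈ Fm', ∃ x, x ∈ firstSym (φ g) ∧ x ∈ fatoms g := by
      intro g hg
      have h := hφex g hg
      simp only [φ, dif_pos h]
      exact h.choose_spec.2
    have hφinj : Set.InjOn φ Fm' := by
      intro g₁ hg₁ g₂ hg₂ heq
      obtain ⟨x₁, hx₁f, hx₁g⟩ := hφspec g₁ hg₁
      obtain ⟨x₂, hx₂f, hx₂g⟩ := hφspec g₂ hg₂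
      rw [heq] at hx₁f
      have hfE : φ g₂ ∈ Fm := hφmem g₂ hg₂
      have hne : (φ g₂).1 ≠ [] := E.nonemptyDisj _ (mem_Fm.mp hfE).1
      have hxx : x₁ = x₂ := firstSym_mem_sub hne hx₁f hx₂f
      rw [hxx] at hx₁g
      exact unique_fac E'.distinct (mem_Fm'.mp hg₁).1 (mem_Fm'.mp hg₂).1 hx₁g hx₂g
    have hcard1 : Fm'.card ≤ Fm.card := Finset.card_le_card_of_injOn φ hφmem hφinj
    -- ψ : Fm ↪ Fm'.erase f'  via single-deviation words of E'
    have hψex : ∀ f ∈ Fm, ∃ g, ((g ∈ E'.factors ∧ mandF g) ∧ g ≠ f') ∧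
        ∃ x, x ∈ firstSym g ∧ x ∈ fatoms f := by
      intro f hf
      obtain ⟨hfE, hfm⟩ := mem_Fm.mp hf
      obtain ⟨s, hsf', hsf⟩ := hcaseI f hfE hfm
      have happs : appE E' s := mand_app hf' hm' hsf'
      have hdev : devW E' s ∈ E.lang := h2 _ (devW_mem_CS E' happs)
      obtain ⟨x, hx, hxf⟩ := X4 hdev hfE hfm
      rcases mem_devW hx with rfl | ⟨g, hg, hgm, hsg, hxg⟩
      · exact absurd hxf hsf
      · refine ⟨g, ⟨⟨hg, hgm⟩, ?_⟩, x, hxg, hxf⟩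
        rintro rfl
        exact hsg hsf'
    let ψ : (List (α × Mult) × Mult) → (List (α × Mult) × Mult) := fun f =>
      if h : ∃ g, ((g ∈ E'.factors ∧ mandF g) ∧ g ≠ f') ∧
          ∃ x, x ∈ firstSym g ∧ x ∈ fatoms f
      then h.choose else f
    have hψmem : ∀ f ∈ Fm, ψ f ∈ Fm'.erase f' := by
      intro f hf
      have h := hψex f hf
      simp only [ψ, dif_pos h]
      exact Finset.mem_erase.mpr ⟨h.choose_spec.1.2, mem_Fm'.mpr h.choose_spec.1.1⟩
    have hψspec : ∀ f ∈ Fm, ∃ x, x ∈ firstSym (ψ f) ∧ x ∈ fatoms f := by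
      intro f hf
      have h := hψex f hf
      simp only [ψ, dif_pos h]
      exact h.choose_spec.2
    have hψinj : Set.InjOn ψ Fm := by
      intro f₁ hf₁ f₂ hf₂ heq
      obtain ⟨x₁, hx₁g, hx₁f⟩ := hψspec f₁ hf₁
      obtain ⟨x₂, hx₂g, hx₂f⟩ := hψspec f₂ hf₂
      rw [heq] at hx₁g
      have hgE : ψ f₂ ∈ Fm'.erase f' := hψmem f₂ hf₂
      have hne : (ψ f₂).1 ≠ [] :=
        E'.nonemptyDisj _ (mem_Fm'.mp (Finset.mem_of_mem_erase hgE)).1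
      have hxx : x₁ = x₂ := firstSym_mem_sub hne hx₁g hx₂g
      rw [hxx] at hx₁f
      exact unique_fac E.distinct (mem_Fm.mp hf₁).1 (mem_Fm.mp hf₂).1 hx₁f hx₂f
    have hcard2 : Fm.card ≤ (Fm'.erase f').card := Finset.card_le_card_of_injOn ψ hψmem hψinj
    have hf'mem : f' ∈ Fm' := mem_Fm'.mpr ⟨hf', hm'⟩
    have herase : (Fm'.erase f').card = Fm'.card - 1 := Finset.card_erase_of_mem hf'mem
    have hpos : 1 ≤ Fm'.card := Finset.card_pos.mpr ⟨f', hf'mem⟩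
    omega

end Learnability7
section Learnability8

variable {α : Type}

open scoped Classical

lemma count_dev2W_self (E : DME α) (a : α) : 2 ≤ (dev2W E a).count a := by
  simp only [dev2W, devW, Multiset.count_cons_self]
  omega

lemma appE'_of (E E' : DME α) (h1 : ∀ w ∈ CS E, w ∈ E'.lang) {w : Multiset α}
    (hw : w ∈ E.lang) {a : α} (ha : a ∈ w) : appE E' a := by
  have happ : appE E a := X1 hw ha
  have hdev : devW E a ∈ E'.lang := h1 _ (devW_mem_CS E happ)
  exact X1 hdev (Multiset.mem_cons_self a _)

/-- The `oneCond` part for a `one`/`opt` factor of `E'`, when the restriction is nonempty. -/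
lemma oneCond_of_ne {E E' : DME α}
    (h1 : ∀ w ∈ CS E, w ∈ E'.lang) {w : Multiset α} (hw : w ∈ E.lang)
    {f' : List (α × Mult) × Mult} (hf' : f' ∈ E'.factors)
    (hM : f'.2 = Mult.one ∨ f'.2 = Mult.opt)
    (hv : w.filter (· ∈ fatoms f') ≠ 0) :
    oneCond f'.1 (w.filter (· ∈ fatoms f')) := by
  obtain ⟨a, ha⟩ := Multiset.exists_mem_of_ne_zero hv
  obtain ⟨haw, haf'⟩ := Multiset.mem_filter.mp ha
  have hall : ∀ x ∈ w.filter (· ∈ fatoms f'), x = a := by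
    intro x hx
    by_contra hne
    obtain ⟨hxw, hxf'⟩ := Multiset.mem_filter.mp hx
    have hco : cooc E x a := X3 hw hne hxw haw
    have hp : pairW E x a ∈ E'.lang := h1 _ (pairW_mem_CS E hne hco)
    have hco' : cooc E' x a := X3 hp hne (Multiset.mem_cons_self _ _)
      (Multiset.mem_cons_of_mem (Multiset.mem_cons_self _ _))
    have := hco'.2.2 f' hf' hxf' haf'
    rcases hM with h | h <;> rw [h] at this <;> rcases this with h' | h' <;> simp at h'
  have hrep : w.filter (· ∈ fatoms f')
      = Multiset.replicate (Multiset.card (w.filter (· ∈ fatoms f'))) a :=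
    Multiset.eq_replicate_card.mpr hall
  set c := Multiset.card (w.filter (· ∈ fatoms f')) with hc
  have hc1 : 1 ≤ c := by
    rw [hc]
    by_contra h
    push_neg at h
    interval_cases hcv : Multiset.card (w.filter (· ∈ fatoms f'))
    · rw [Multiset.card_eq_zero] at hcv
      exact hv hcv
  have happ' : appE E' a := appE'_of E E' h1 hw haw
  obtain ⟨g, hg, hg2, m, hm, hm0⟩ := happ'
  have hgf : g = f' := unique_fac E'.distinct hg hf' (mem_fatoms_iff.mpr ⟨m, hm⟩) haf'
  rw [hgf] at hm
  rcases Nat.lt_or_ge c 2 with hc2 | hc2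
  · have : c = 1 := by omega
    rw [this] at hrep
    exact ⟨(a, m), hm, 1, one_mem_sem hm0, hrep⟩
  · -- c ≥ 2 : use the double word
    have hcount : c ≤ w.count a := by
      have : (w.filter (· ∈ fatoms f')).count a = c := by
        rw [hrep]
        simp
      rw [← this, Multiset.count_filter]
      simp [haf']
    have h2a : twoAllowed E a := X2 hw (by omega)
    have hd2 : dev2W E a ∈ E'.lang := h1 _ (dev2W_mem_CS E h2a)
    have h2a' : twoAllowed E' a := X2 hd2 (count_dev2W_self E a)
    obtain ⟨g', hg', _, m', hm', _, hsp⟩ := h2a'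
    have hgf' : g' = f' := unique_fac E'.distinct hg' hf' (mem_fatoms_iff.mpr ⟨m', hm'⟩) haf'
    rw [hgf'] at hm'
    have hmm : m' = m := atom_mult_unique (fac_nodup E'.distinct hf') hm' hm
    subst hmm
    have hmps : m' = Mult.plus ∨ m' = Mult.star := by
      rw [hgf'] at hsp
      rcases hsp with h | h | h | h
      · rcases hM with h'' | h'' <;> rw [h''] at h <;> simp at h
      · rcases hM with h'' | h'' <;> rw [h''] at h <;> simp at h
      · exact Or.inl h
      · exact Or.inr h
    refine ⟨(a, m'), hm', c, ?_, hrep⟩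
    rcases hmps with h | h <;> rw [h] <;> simp [Mult.sem] <;> omega

/-- Mutual consistency of characteristic samples implies language inclusion. -/
theorem lang_mono_of_mutual (E E' : DME α)
    (h1 : ∀ w ∈ CS E, w ∈ E'.lang) (h2 : ∀ w ∈ CS E', w ∈ E.lang) :
    E.lang ⊆ E'.lang := by
  intro w hw
  rw [mem_lang_iff]
  constructor
  · intro a ha
    obtain ⟨f, hf, _, m, hm, _⟩ := appE'_of E E' h1 hw ha
    exact ⟨f, hf, mem_fatoms_iff.mpr ⟨m, hm⟩⟩
  · intro f' hf'
    have hstar : ∀ x ∈ w.filter (· ∈ fatoms f'), ∃ m, (x, m) ∈ f'.1 ∧ m ≠ Mult.zero := by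
      intro x hx
      obtain ⟨hxw, hxf'⟩ := Multiset.mem_filter.mp hx
      obtain ⟨g, hg, hg2, m, hm, hm0⟩ := appE'_of E E' h1 hw hxw
      have : g = f' := unique_fac E'.distinct hg hf' (mem_fatoms_iff.mpr ⟨m, hm⟩) hxf'
      subst this
      exact ⟨m, hm, hm0⟩
    have hhit : mandF f' → w.filter (· ∈ fatoms f') ≠ 0 := by
      intro hmand
      obtain ⟨f, hf, hfm, hsub⟩ := hard_part h1 h2 hf' hmand
      obtain ⟨x, hxw, hxf⟩ := X4 hw hf hfm
      intro h0
      have : x ∈ w.filter (· ∈ fatoms f') := Multiset.mem_filter.mpr ⟨hxw, hsub x hxf⟩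
      rw [h0] at this
      simp at this
    cases hM : f'.2 with
    | zero =>
      show _ = 0
      rw [Multiset.eq_zero_iff_forall_notMem]
      intro x hx
      obtain ⟨hxw, hxf'⟩ := Multiset.mem_filter.mp hx
      obtain ⟨g, hg, hg2, m, hm, _⟩ := appE'_of E E' h1 hw hxw
      have : g = f' := unique_fac E'.distinct hg hf' (mem_fatoms_iff.mpr ⟨m, hm⟩) hxf'
      rw [this, hM] at hg2
      exact hg2 rfl
    | star => exact hstar
    | plus =>
      refine ⟨hstar, ?_⟩
      by_cases hmand : mandF f'
      · exact Or.inl (hhit hmand)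
      · right
        rw [mandF] at hmand
        push_neg at hmand
        exact hmand (Or.inr hM)
    | one =>
      by_cases hv : w.filter (· ∈ fatoms f') = 0
      · by_cases hmand : mandF f'
        · exact absurd hv (hhit hmand)
        · rw [mandF] at hmand
          push_neg at hmand
          obtain ⟨p, hp, hp0⟩ := hmand (Or.inl hM)
          refine ⟨p, hp, 0, hp0, ?_⟩
          rw [hv]
          simp
      · exact oneCond_of_ne h1 hw hf' (Or.inl hM) hv
    | opt =>
      by_cases hv : w.filter (· ∈ fatoms f') = 0
      · exact Or.inl hv
      · exact Or.inr (oneCond_of_ne h1 hw hf' (Or.inr hM) hv)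

end Learnability8
section Learnability9

open scoped Classical

/-- The universal DME: every symbol in its own starred factor. -/
noncomputable def topDME (α : Type) [Fintype α] : DME α where
  factors := (Finset.univ.toList (α := α)).map fun a => ([(a, Mult.star)], Mult.star)
  nonemptyDisj := by
    intro d hd
    obtain ⟨a, _, rfl⟩ := List.mem_map.mp hd
    simp
  distinct := by
    have : (((Finset.univ.toList (α := α)).map fun a => (([(a, Mult.star)], Mult.star) :
        List (α × Mult) × Mult)).flatMap fun d => d.1.map Prod.fst)
        = Finset.univ.toList (α := α) := by
      induction Finset.univ.toList (α := α) with
      | nil => simp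
      | cons x xs ih => simp [ih]
    rw [this]
    exact Finset.nodup_toList _

lemma mem_topDME {α : Type} [Fintype α] (w : Multiset α) : w ∈ (topDME α).lang := by
  rw [mem_lang_iff]
  constructor
  · intro a _
    refine ⟨([(a, Mult.star)], Mult.star), ?_, by simp [fatoms]⟩
    exact List.mem_map.mpr ⟨a, by simp [Finset.mem_toList], rfl⟩
  · intro f hf
    obtain ⟨a, _, rfl⟩ := List.mem_map.mp hf
    intro x hx
    have := (Multiset.mem_filter.mp hx).2
    simp [fatoms] at this
    subst this
    exact ⟨Mult.star, by simp, by simp⟩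

/-- The learner: pick any DME whose characteristic sample is included in the data and
whose language contains the data. -/
noncomputable def learner (α : Type) [Fintype α] :
    {D : Finset (Multiset α) // D.Nonempty} → DME α := fun D =>
  if h : ∃ E' : DME α, CS E' ⊆ D.val ∧ ↑D.val ⊆ E'.lang then h.choose else topDME α

lemma learner_sound (α : Type) [Fintype α] (D : {D : Finset (Multiset α) // D.Nonempty}) :
    ↑D.val ⊆ (learner α D).lang := by
  rw [learner]
  split_ifs with h
  · exact h.choose_spec.2
  · intro w _
    exact mem_topDME w

end Learnability9

/-- The class DME is learnable from positive examples: a sound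
learner, complete with characteristic samples of cardinality polynomial in the
size of the alphabet. -/
theorem dme_learnable_from_positive :
    ∃ p : Polynomial ℕ,
      ∀ (α : Type) [Fintype α],
        ∃ learner : {D : Finset (Multiset α) // D.Nonempty} → DME α,
          (∀ D : {D : Finset (Multiset α) // D.Nonempty},
              ↑D.val ⊆ (learner D).lang) ∧
          (∀ E : DME α, ∃ CS : Finset (Multiset α),
              ↑CS ⊆ E.lang ∧ CS.card ≤ p.eval (Fintype.card α) ∧
              ∀ (D : Finset (Multiset α)) (hne : D.Nonempty),
                CS ⊆ D → ↑D ⊆ E.lang →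
                (learner ⟨D, hne⟩).lang = E.lang) := by
  refine ⟨3 * (Polynomial.X + 1) ^ 2, ?_⟩
  intro α _
  refine ⟨learner α, learner_sound α, ?_⟩
  intro E
  refine ⟨CS E, ?_, ?_, ?_⟩
  · intro w hw
    exact CS_subset_lang E w (by exact_mod_cast hw)
  · have h := CS_card E
    have heval : (3 * (Polynomial.X + 1) ^ 2 : Polynomial ℕ).eval (Fintype.card α)
        = 3 * (Fintype.card α + 1) ^ 2 := by
      simp
    rw [heval]
    nlinarith [h, Fintype.card α]
  · intro D hne hCS hD
    have hex : ∃ E' : DME α, CS E' ⊆ D ∧ ↑D ⊆ E'.lang := ⟨E, hCS, hD⟩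
    rw [learner, dif_pos hex]
    set E₀ := hex.choose with hE₀
    obtain ⟨hc1, hc2⟩ := hex.choose_spec
    have h1 : ∀ w ∈ CS E₀, w ∈ E.lang := fun w hw => hD (Finset.mem_coe.mpr (hc1 hw))
    have h2 : ∀ w ∈ CS E, w ∈ E₀.lang := fun w hw => hc2 (Finset.mem_coe.mpr (hCS hw))
    exact Set.Subset.antisymm (lang_mono_of_mutual E₀ E h1 h2) (lang_mono_of_mutual E E₀ h2 h1)

end LSXML
end

section
/- There exists a polynomial p : ℕ → ℕ such that for every finite alphabet Σ there is a function learner mapping each finite nonempty set of trees over Σ that all have the same root label to a disjunction-free multiplicity schema over Σ with: (soundness) for every such set D, D ⊆ L(learner(D)); and (completeness) for every MS S over Σ there exists a finite set CS_S ⊆ L(S) with |CS_S| ≤ p(|Σ|) such that for every finite set D with CS_S ⊆ D ⊆ L(S), L(learner(D)) = L(S). -/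
namespace LSXML

/-- A sample for schema learning: a finite nonempty set of trees all having the
same root label. -/
def TreeSample (α : Type) : Type :=
  {D : Finset (UTree α) // D.Nonempty ∧ ∃ r : α, ∀ t ∈ D, t.label = r}

section Proof

variable {α : Type}

/-- Subtree relation. -/
inductive Sub : UTree α → UTree α → Prop
  | refl (t : UTree α) : Sub t t
  | step {s t : UTree α} {b : α} {ts : List (UTree α)} :
      t ∈ ts → Sub s t → Sub s (UTree.node b ts)

theorem Sub.trans' {s t u : UTree α} (h1 : Sub s t) (h2 : Sub t u) : Sub s u := by
  induction h2 with
  | refl => exact h1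
  | step hmem _ ih => exact Sub.step hmem ih

/-- Strong induction over unordered trees. -/
theorem UTree.strongInd {P : UTree α → Prop}
    (h : ∀ a ts, (∀ t ∈ ts, P t) → P (UTree.node a ts)) : ∀ t, P t
  | .node a ts => h a ts (fun t _ => UTree.strongInd h t)

theorem msat_node_iff [DecidableEq α] {R : α → MExpr α} {a : α} {ts : List (UTree α)} :
    UTree.MSat R (UTree.node a ts) ↔
      ((ts.map UTree.label : List α) : Multiset α) ∈ (R a).lang ∧
        ∀ t ∈ ts, UTree.MSat R t := by
  constructor
  · intro h
    cases h with
    | node _ _ h1 h2 => exact ⟨h1, h2⟩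
  · rintro ⟨h1, h2⟩
    exact .node a ts h1 h2

theorem msat_of_sub [DecidableEq α] {R : α → MExpr α} {s t : UTree α}
    (hsub : Sub s t) (h : UTree.MSat R t) : UTree.MSat R s := by
  induction hsub with
  | refl => exact h
  | step hmem _ ih =>
    apply ih
    rw [msat_node_iff] at h
    exact h.2 _ hmem

/-- The labels of a list of trees, as a multiset. -/
def labels (ts : List (UTree α)) : Multiset α := (ts.map UTree.label : List α)

/-- The set of counts of `b`-children at `a`-nodes of `t`. -/
def occCnt [DecidableEq α] (a b : α) (t : UTree α) : Set ℕ :=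
  {k | ∃ cs, Sub (UTree.node a cs) t ∧ (labels cs).count b = k}

/-- The set of counts of `b`-children at `a`-nodes of trees of `D`. -/
def obsCnt [DecidableEq α] (a b : α) (D : Set (UTree α)) : Set ℕ :=
  {k | ∃ t ∈ D, k ∈ occCnt a b t}

open Classical in
/-- The minimal multiplicity covering a set of counts. -/
noncomputable def mcov (C : Set ℕ) : Mult :=
  if ∃ k ∈ C, 2 ≤ k then (if 0 ∈ C then .star else .plus)
  else if 1 ∈ C then (if 0 ∈ C then .opt else .one) else .zero

theorem subset_mcov_sem (C : Set ℕ) : C ⊆ (mcov C).sem := by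
  intro k hk
  unfold mcov
  split_ifs with h1 h2 h3 h4
  · exact Set.mem_univ k
  · simp only [Mult.sem, Set.mem_setOf_eq]
    rcases Nat.eq_zero_or_pos k with h | h
    · exact absurd (h ▸ hk) h2
    · exact h
  · simp only [Mult.sem, Set.mem_insert_iff, Set.mem_singleton_iff]
    by_contra hc
    push_neg at hc
    exact h1 ⟨k, hk, by omega⟩
  · simp only [Mult.sem, Set.mem_singleton_iff]
    rcases Nat.lt_or_ge k 2 with h | h
    · interval_cases k
      · exact absurd hk h4
      · rfl
    · exact absurd ⟨k, hk, h⟩ h1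
  · simp only [Mult.sem, Set.mem_singleton_iff]
    rcases Nat.lt_or_ge k 2 with h | h
    · interval_cases k
      · rfl
      · exact absurd hk h3
    · exact absurd ⟨k, hk, h⟩ h1

theorem mcov_sem_subset {C : Set ℕ} {M : Mult} (hne : C.Nonempty) (h : C ⊆ M.sem) :
    (mcov C).sem ⊆ M.sem := by
  intro k hk
  unfold mcov at hk
  split_ifs at hk with h1 h2 h3 h4
  · -- star: 0 ∈ C and some ≥ 2 ∈ C
    obtain ⟨j, hj, hj2⟩ := h1
    have hj' := h hj; have h0' := h h2
    cases M <;> simp only [Mult.sem, Set.mem_univ, Set.mem_setOf_eq, Set.mem_insert_iff,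
      Set.mem_singleton_iff] at * <;> omega
  · obtain ⟨j, hj, hj2⟩ := h1
    have hj' := h hj
    cases M <;> simp only [Mult.sem, Set.mem_univ, Set.mem_setOf_eq, Set.mem_insert_iff,
      Set.mem_singleton_iff] at * <;> omega
  · have h1' := h h3; have h0' := h h4
    cases M <;> simp only [Mult.sem, Set.mem_univ, Set.mem_setOf_eq, Set.mem_insert_iff,
      Set.mem_singleton_iff] at * <;> omega
  · have h1' := h h3
    cases M <;> simp only [Mult.sem, Set.mem_univ, Set.mem_setOf_eq, Set.mem_insert_iff,
      Set.mem_singleton_iff] at * <;> omega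
  · -- all of C is 0, and C nonempty, so 0 ∈ C
    obtain ⟨j, hj⟩ := hne
    have hj0 : j = 0 := by
      by_contra hc
      rcases Nat.lt_or_ge j 2 with hl | hl
      · interval_cases j
        · exact hc rfl
        · exact h3 hj
      · exact h1 ⟨j, hj, hl⟩
    have h0' := h (hj0 ▸ hj)
    cases M <;> simp only [Mult.sem, Set.mem_univ, Set.mem_setOf_eq, Set.mem_insert_iff,
      Set.mem_singleton_iff] at * <;> omega

theorem mcov_congr {C C' : Set ℕ} (h0 : 0 ∈ C ↔ 0 ∈ C') (h1 : 1 ∈ C ↔ 1 ∈ C')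
    (h2 : (∃ k ∈ C, 2 ≤ k) ↔ ∃ k ∈ C', 2 ≤ k) : mcov C = mcov C' := by
  have e0 : (0 ∈ C) = (0 ∈ C') := propext h0
  have e1 : (1 ∈ C) = (1 ∈ C') := propext h1
  have e2 : (∃ k ∈ C, 2 ≤ k) = (∃ k ∈ C', 2 ≤ k) := propext h2
  unfold mcov
  rw [e0, e1, e2]

theorem pos_of_mem_mcov {C : Set ℕ} {k : ℕ} (hk : k ∈ (mcov C).sem) (h : k ≠ 0) :
    ∃ j ∈ C, j ≠ 0 := by
  unfold mcov at hk
  split_ifs at hk with h1 h2 h3 h4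
  · obtain ⟨j, hj, hj2⟩ := h1; exact ⟨j, hj, by omega⟩
  · obtain ⟨j, hj, hj2⟩ := h1; exact ⟨j, hj, by omega⟩
  · exact ⟨1, h3, one_ne_zero⟩
  · exact ⟨1, h3, one_ne_zero⟩
  · simp only [Mult.sem, Set.mem_singleton_iff] at hk
    exact absurd hk h


section Learner

variable [DecidableEq α] [Fintype α]

/-- The rule with entries `b^{m b}` for every symbol `b`. -/
noncomputable def mkRule (m : α → Mult) : MExpr α :=
  ⟨Finset.univ.toList.map fun b => (b, m b), by
    have : (List.map Prod.fst (Finset.univ.toList.map fun b => (b, m b))) =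
        Finset.univ.toList := by
      simp [Function.comp_def]
    rw [this]
    exact Finset.univ.nodup_toList⟩

theorem mem_mkRule_lang {m : α → Mult} {w : Multiset α} :
    w ∈ (mkRule m).lang ↔ ∀ b, w.count b ∈ (m b).sem := by
  unfold mkRule MExpr.lang
  simp only [Set.mem_setOf_eq]
  constructor
  · rintro ⟨h1, -⟩ b
    exact h1 (b, m b) (List.mem_map.2 ⟨b, by simp, rfl⟩)
  · intro h
    refine ⟨?_, ?_⟩
    · rintro ⟨b, M⟩ hp
      obtain ⟨c, -, hc⟩ := List.mem_map.1 hp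
      obtain ⟨rfl, rfl⟩ := Prod.mk.injEq .. ▸ hc
      exact h c
    · intro b hb
      exact absurd (List.mem_map.2 ⟨(b, m b), List.mem_map.2 ⟨b, by simp, rfl⟩, rfl⟩) hb

/-- The rules inferred from a set of trees. -/
noncomputable def infRules (D : Set (UTree α)) : α → MExpr α :=
  fun a => mkRule fun b => mcov (obsCnt a b D)

/-- Soundness: every subtree of a tree of `D` satisfies the inferred rules. -/
theorem msat_infRules_of_sub {D : Set (UTree α)} :
    ∀ t : UTree α, (∃ w ∈ D, Sub t w) → UTree.MSat (infRules D) t := by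
  refine UTree.strongInd ?_
  rintro a ts ih ⟨w, hw, hsub⟩
  refine .node a ts ?_ ?_
  · rw [infRules, mem_mkRule_lang]
    intro b
    exact subset_mcov_sem _ ⟨w, hw, ts, hsub, rfl⟩
  · intro t ht
    exact ih t ht ⟨w, hw, Sub.trans' (Sub.step ht (Sub.refl t)) hsub⟩

theorem count_obsCnt {D : Set (UTree α)} {w : UTree α} {a b : α} {cs : List (UTree α)}
    (hw : w ∈ D) (hsub : Sub (UTree.node a cs) w) : (labels cs).count b ∈ obsCnt a b D :=
  ⟨w, hw, cs, hsub, rfl⟩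

/-- Every observed child-word at an `a`-node of a tree satisfying `S` belongs to the
language of the rule of `a`. -/
theorem obsCnt_sat {S : MS α} {D : Set (UTree α)} (hD : ∀ w ∈ D, UTree.MSat S.rules w)
    {a b : α} {k : ℕ} (hk : k ∈ obsCnt a b D) :
    ∃ w : Multiset α, w ∈ (S.rules a).lang ∧ w.count b = k := by
  obtain ⟨t, ht, cs, hsub, hc⟩ := hk
  have hm := msat_of_sub hsub (hD t ht)
  rw [msat_node_iff] at hm
  exact ⟨labels cs, hm.1, hc⟩


/-- Minimality: any tree satisfying the inferred rules, whose root label occurs in `D`,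
satisfies the rules of any schema `S` with `D ⊆ L(S)`. -/
theorem msat_of_msat_infRules {S : MS α} {D : Set (UTree α)}
    (hD : ∀ w ∈ D, UTree.MSat S.rules w) :
    ∀ t : UTree α, UTree.MSat (infRules D) t →
      (∃ w ∈ D, ∃ cs, Sub (UTree.node t.label cs) w) → UTree.MSat S.rules t := by
  refine UTree.strongInd ?_
  rintro a ts ih hms ⟨w, hw, cs, hsub⟩
  rw [msat_node_iff] at hms
  obtain ⟨hloc, hch⟩ := hms
  rw [infRules, mem_mkRule_lang] at hloc
  have hne : ∀ b, (obsCnt a b D).Nonempty := fun b => ⟨_, count_obsCnt hw hsub⟩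
  refine .node a ts ?_ ?_
  · refine ⟨?_, ?_⟩
    · rintro ⟨b, M⟩ hp
      refine mcov_sem_subset (hne b) ?_ (hloc b)
      intro k hk
      obtain ⟨u, hu, hcu⟩ := obsCnt_sat hD hk
      exact hcu ▸ hu.1 (b, M) hp
    · intro b hb
      have : (labels ts).count b ∈ Mult.zero.sem := by
        refine mcov_sem_subset (hne b) ?_ (hloc b)
        intro k hk
        obtain ⟨u, hu, hcu⟩ := obsCnt_sat hD hk
        exact (hcu ▸ hu.2 b hb : k = 0)
      exact this
  · intro t ht
    refine ih t ht (hch t ht) ?_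
    -- t's label occurs in D
    have hcnt : (labels ts).count t.label ≠ 0 := by
      rw [Multiset.count_ne_zero]
      simp only [labels, Multiset.mem_coe, List.mem_map]
      exact ⟨t, ht, rfl⟩
    obtain ⟨j, hj, hj0⟩ := pos_of_mem_mcov (hloc t.label) hcnt
    obtain ⟨w', hw', cs', hsub', hc'⟩ := hj
    have : t.label ∈ labels cs' := by
      rw [← Multiset.count_pos, hc']
      omega
    simp only [labels, Multiset.mem_coe, List.mem_map] at this
    obtain ⟨u, hu, hlu⟩ := this
    cases u with
    | node c cs'' =>
      have hc : c = t.label := hlu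
      subst hc
      exact ⟨w', hw', cs'', Sub.trans' (Sub.step hu (Sub.refl _)) hsub'⟩

/-- Completeness: a tree embeddable in `L(S)` satisfying `S`'s rules satisfies the
inferred rules, provided the observed count features over `D` match those over `L(S)`. -/
theorem msat_infRules_of_msat {S : MS α} {D : Set (UTree α)}
    (hfeat : ∀ a b, mcov (obsCnt a b D) = mcov (obsCnt a b S.lang)) :
    ∀ t : UTree α, UTree.MSat S.rules t → (∃ w ∈ S.lang, Sub t w) →
      UTree.MSat (infRules D) t := by
  refine UTree.strongInd ?_
  rintro a ts ih hms ⟨w, hw, hsub⟩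
  rw [msat_node_iff] at hms
  refine .node a ts ?_ ?_
  · rw [infRules, mem_mkRule_lang]
    intro b
    rw [hfeat a b]
    exact subset_mcov_sem _ (count_obsCnt hw hsub)
  · intro t ht
    exact ih t ht (hms.2 t ht) ⟨w, hw, Sub.trans' (Sub.step ht (Sub.refl t)) hsub⟩


open Classical in
/-- A chosen witness in `L(S)` satisfying `P`, if any; else the default tree. -/
noncomputable def wit (S : MS α) (t₀ : UTree α) (P : UTree α → Prop) : UTree α :=
  if hx : ∃ t ∈ S.lang, P t then hx.choose else t₀

theorem wit_mem {S : MS α} {t₀ : UTree α} (h₀ : t₀ ∈ S.lang) (P : UTree α → Prop) :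
    wit S t₀ P ∈ S.lang := by
  unfold wit
  split_ifs with hx
  · exact hx.choose_spec.1
  · exact h₀

theorem wit_spec {S : MS α} {t₀ : UTree α} (P : UTree α → Prop)
    (h : ∃ t ∈ S.lang, P t) : P (wit S t₀ P) := by
  unfold wit
  rw [dif_pos h]
  exact h.choose_spec.2

end Learner

end Proof

/-- The class MS is learnable from positive examples. -/
theorem ms_learnable_from_positive :
    ∃ p : Polynomial ℕ,
      ∀ (α : Type) [Fintype α] [DecidableEq α],
        ∃ learner : TreeSample α → MS α,
          (∀ D : TreeSample α, ↑D.val ⊆ (learner D).lang) ∧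
          (∀ S : MS α, ∃ CS : Finset (UTree α),
              ↑CS ⊆ S.lang ∧ CS.card ≤ p.eval (Fintype.card α) ∧
              ∀ (D : Finset (UTree α)) (hne : D.Nonempty)
                (hr : ∃ r : α, ∀ t ∈ D, t.label = r),
                CS ⊆ D → ↑D ⊆ S.lang →
                (learner ⟨D, hne, hr⟩).lang = S.lang) := by
  classical
  refine ⟨Polynomial.C 3 * Polynomial.X ^ 2, ?_⟩
  intro α _ _
  refine ⟨fun D => ⟨D.2.2.choose, infRules (↑D.1 : Set (UTree α))⟩, ?_, ?_⟩
  · -- soundness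
    rintro D t ht
    have ht' : t ∈ D.1 := by simpa using ht
    exact ⟨D.2.2.choose_spec t ht',
      msat_infRules_of_sub t ⟨t, by simpa using ht', Sub.refl t⟩⟩
  · -- completeness
    intro S
    by_cases hS : S.lang.Nonempty
    · obtain ⟨t₀, ht₀⟩ := hS
      set w0 : α × α → UTree α :=
        fun x => wit S t₀ (fun t => 0 ∈ occCnt x.1 x.2 t) with hw0
      set w1 : α × α → UTree α :=
        fun x => wit S t₀ (fun t => 1 ∈ occCnt x.1 x.2 t) with hw1
      set w2 : α × α → UTree α :=
        fun x => wit S t₀ (fun t => ∃ k ∈ occCnt x.1 x.2 t, 2 ≤ k) with hw2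
      refine ⟨Finset.univ.image w0 ∪ Finset.univ.image w1 ∪ Finset.univ.image w2,
        ?_, ?_, ?_⟩
      · -- CS ⊆ L(S)
        intro t htm
        simp only [Finset.coe_union, Set.mem_union, Finset.coe_image, Set.mem_image,
          Finset.mem_coe, Finset.mem_univ, true_and] at htm
        rcases htm with (⟨x, rfl⟩ | ⟨x, rfl⟩) | ⟨x, rfl⟩ <;>
          exact wit_mem ht₀ _
      · -- cardinality bound
        have hcard : (Finset.univ.image w0 ∪ Finset.univ.image w1 ∪
            Finset.univ.image w2).card ≤ 3 * Fintype.card α ^ 2 := by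
          have h0 := Finset.card_image_le (s := (Finset.univ : Finset (α × α))) (f := w0)
          have h1 := Finset.card_image_le (s := (Finset.univ : Finset (α × α))) (f := w1)
          have h2 := Finset.card_image_le (s := (Finset.univ : Finset (α × α))) (f := w2)
          have hu := Finset.card_union_le (Finset.univ.image w0 ∪ Finset.univ.image w1)
            (Finset.univ.image w2)
          have hu' := Finset.card_union_le (Finset.univ.image w0) (Finset.univ.image w1)
          have hc : (Finset.univ : Finset (α × α)).card =
              Fintype.card α * Fintype.card α := by
            simp [Fintype.card_prod]
          have h3 : Fintype.card α * Fintype.card α + Fintype.card α * Fintype.card α +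
              Fintype.card α * Fintype.card α = 3 * Fintype.card α ^ 2 := by ring
          omega
        simpa using hcard
      · -- exactness
        intro D hne hr hCS hDS
        have hD' : ∀ w ∈ (↑D : Set (UTree α)), UTree.MSat S.rules w :=
          fun w hw => (hDS hw).2
        obtain ⟨t₁, ht₁⟩ := hne
        have hroot : hr.choose = S.root := by
          rw [← hr.choose_spec t₁ ht₁]
          exact (hDS (by simpa using ht₁)).1
        have hmemD : ∀ x : α × α, w0 x ∈ (↑D : Set (UTree α)) ∧
            w1 x ∈ (↑D : Set (UTree α)) ∧ w2 x ∈ (↑D : Set (UTree α)) := by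
          intro x
          refine ⟨?_, ?_, ?_⟩ <;>
          · simp only [Finset.mem_coe]
            apply hCS
            simp only [Finset.mem_union, Finset.mem_image, Finset.mem_univ, true_and]
            first
            | exact Or.inl (Or.inl ⟨x, rfl⟩)
            | exact Or.inl (Or.inr ⟨x, rfl⟩)
            | exact Or.inr ⟨x, rfl⟩
        have hmono : ∀ a b, obsCnt a b (↑D : Set (UTree α)) ⊆ obsCnt a b S.lang := by
          rintro a b k ⟨t, ht, hk⟩
          exact ⟨t, hDS ht, hk⟩
        have hfeat : ∀ a b, mcov (obsCnt a b (↑D : Set (UTree α))) =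
            mcov (obsCnt a b S.lang) := by
          intro a b
          refine mcov_congr ⟨fun h => hmono a b h, ?_⟩ ⟨fun h => hmono a b h, ?_⟩
            ⟨fun ⟨k, hk, h2⟩ => ⟨k, hmono a b hk, h2⟩, ?_⟩
          · rintro ⟨t, ht, hk⟩
            have := wit_spec (t₀ := t₀) (fun t => 0 ∈ occCnt a b t) ⟨t, ht, hk⟩
            exact ⟨w0 (a, b), (hmemD (a, b)).1, this⟩
          · rintro ⟨t, ht, hk⟩
            have := wit_spec (t₀ := t₀) (fun t => 1 ∈ occCnt a b t) ⟨t, ht, hk⟩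
            exact ⟨w1 (a, b), (hmemD (a, b)).2.1, this⟩
          · rintro ⟨k, ⟨t, ht, hk⟩, h2⟩
            have := wit_spec (t₀ := t₀) (fun t => ∃ k ∈ occCnt a b t, 2 ≤ k)
              ⟨t, ht, k, hk, h2⟩
            obtain ⟨k', hk', h2'⟩ := this
            exact ⟨k', ⟨w2 (a, b), (hmemD (a, b)).2.2, hk'⟩, h2'⟩
        ext t
        simp only [MS.lang, Set.mem_setOf_eq]
        constructor
        · rintro ⟨hl, hm⟩
          refine ⟨hl.trans hroot, ?_⟩
          refine msat_of_msat_infRules hD' t hm ?_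
          cases t₁ with
          | node a₁ cs₁ =>
            have ha₁ : a₁ = t.label := by
              have h₁ : (UTree.node a₁ cs₁).label = hr.choose := hr.choose_spec _ ht₁
              rw [← hl] at h₁
              exact h₁
            subst ha₁
            exact ⟨UTree.node (t.label) cs₁, by simpa using ht₁, cs₁, Sub.refl _⟩
        · rintro ⟨hl, hm⟩
          exact ⟨hl.trans hroot.symm,
            msat_infRules_of_msat hfeat t hm ⟨t, ⟨hl, hm⟩, Sub.refl t⟩⟩
    · -- L(S) empty: vacuous
      refine ⟨∅, by simp, by simp, ?_⟩
      intro D hne hr hCS hDS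
      obtain ⟨t₁, ht₁⟩ := hne
      exact absurd ⟨t₁, hDS (by simpa using ht₁)⟩ hS

end LSXML
end

section
/- There exists a polynomial p : ℕ → ℕ such that for every finite alphabet Σ there is a function learner mapping each pair (D⁺, D⁻) of finite sets of trees over Σ (positive and negative examples, D⁺ nonempty) to either an MS over Σ or null, with: (soundness) learner(D⁺, D⁻) returns an MS S with D⁺ ⊆ L(S) and D⁻ ∩ L(S) = ∅ whenever such an MS exists, and returns null otherwise; and (completeness) for every MS S over Σ there exists a finite set CS_S ⊆ L(S) with |CS_S| ≤ p(|Σ|) such that for all (D⁺, D⁻) with CS_S ⊆ D⁺ ⊆ L(S) and D⁻ ∩ L(S) = ∅, learner(D⁺, D⁻) returns an MS whose language equals L(S). -/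
namespace LSXML

/-! ### Auxiliary development for the learnability theorem -/

namespace Learn


variable {α : Type}

/-- Children of a tree. -/
def children : UTree α → List (UTree α)
  | .node _ ts => ts

/-- Multiset of labels of children. -/
def childLabels : UTree α → Multiset α
  | .node _ ts => ((ts.map UTree.label : List α) : Multiset α)

/-- List of all nodes (subtrees) of a tree. -/
def nodes : UTree α → List (UTree α)
  | .node a ts => UTree.node a ts :: (ts.attach.flatMap fun x => nodes x.1)
decreasing_by
  have := List.sizeOf_lt_of_mem x.2
  simp only [UTree.node.sizeOf_spec]
  omega

theorem self_mem_nodes (t : UTree α) : t ∈ nodes t := by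
  cases t with
  | node a ts => simp [nodes]

theorem mem_nodes_node {a : α} {ts : List (UTree α)} {s : UTree α} :
    s ∈ nodes (UTree.node a ts) ↔ s = UTree.node a ts ∨ ∃ t ∈ ts, s ∈ nodes t := by
  simp [nodes, List.mem_flatMap]

theorem mem_nodes_trans {s t u : UTree α} (hst : s ∈ nodes t) (htu : t ∈ children u) :
    s ∈ nodes u := by
  cases u with
  | node a ts => exact mem_nodes_node.2 (Or.inr ⟨t, htu, hst⟩)

/-- Custom induction principle for `UTree`. -/
theorem utree_ind {motive : UTree α → Prop}
    (h : ∀ a ts, (∀ t ∈ ts, motive t) → motive (UTree.node a ts)) : ∀ t, motive t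
  | .node a ts => h a ts fun t ht => utree_ind h t
decreasing_by
  have := List.sizeOf_lt_of_mem ht
  simp only [UTree.node.sizeOf_spec]
  omega

theorem nodes_trans {t s u : UTree α} (hs : s ∈ nodes t) (hu : u ∈ nodes s) : u ∈ nodes t := by
  induction t using utree_ind with
  | h a ts ih =>
    rcases mem_nodes_node.1 hs with rfl | ⟨t1, ht1, hs1⟩
    · exact hu
    · exact mem_nodes_node.2 (Or.inr ⟨t1, ht1, ih t1 ht1 hs1⟩)

section DecEq
variable [DecidableEq α]

theorem msat_iff_nodes (R : α → MExpr α) (t : UTree α) :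
    t.MSat R ↔ ∀ s ∈ nodes t, childLabels s ∈ (R s.label).lang := by
  constructor
  · intro h
    induction h with
    | node a ts hmem hall ih =>
      intro s hs
      rcases mem_nodes_node.1 hs with rfl | ⟨t', ht', hs'⟩
      · exact hmem
      · exact ih t' ht' s hs'
  · induction t using utree_ind with
    | h a ts ih =>
      intro h
      exact UTree.MSat.node a ts (h _ (self_mem_nodes _))
        (fun t ht => ih t ht fun s hs => h s (mem_nodes_trans hs ht))

end DecEq

/-! ### Minimal multiplicities -/

open Classical in
/-- The least multiplicity whose semantics contains a (nonempty) set of counts. -/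
noncomputable def minMultSet (C : Set ℕ) : Mult :=
  if C ⊆ {0} then .zero
  else if C ⊆ {1} then .one
  else if C ⊆ ({0, 1} : Set ℕ) then .opt
  else if 0 ∉ C then .plus
  else .star

theorem subset_sem_minMultSet (C : Set ℕ) : C ⊆ Mult.sem (minMultSet C) := by
  unfold minMultSet
  split_ifs with h0 h1 hopt hp
  · exact h0
  · exact h1
  · exact hopt
  · intro n _; trivial
  · intro n hn
    have : n ≠ 0 := fun h => hp (h ▸ hn)
    simpa [Mult.sem] using Nat.one_le_iff_ne_zero.mpr this

theorem sem_minMultSet_subset {C : Set ℕ} (hne : C.Nonempty) {M : Mult}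
    (h : C ⊆ Mult.sem M) : Mult.sem (minMultSet C) ⊆ Mult.sem M := by
  unfold minMultSet
  split_ifs with h0 h1 hopt hp
  · obtain ⟨n, hn⟩ := hne
    have hn0 : n = 0 := h0 hn
    subst hn0
    intro m hm
    have hm0 : m = 0 := hm
    subst hm0
    exact h hn
  · obtain ⟨n, hn⟩ := hne
    have hn1 : n = 1 := h1 hn
    subst hn1
    intro m hm
    have hm1 : m = 1 := hm
    subst hm1
    exact h hn
  · have e0 : (0 : ℕ) ∈ C := by
      by_contra hc
      exact h1 fun n hn => by
        rcases hopt hn with h' | h'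
        · exact absurd (h' ▸ hn) hc
        · exact h'
    have e1 : (1 : ℕ) ∈ C := by
      by_contra hc
      exact h0 fun n hn => by
        rcases hopt hn with h' | h'
        · exact h'
        · exact absurd (h' ▸ hn) hc
    intro m hm
    simp only [Mult.sem, Set.mem_insert_iff, Set.mem_singleton_iff] at hm
    rcases hm with rfl | rfl
    · exact h e0
    · exact h e1
  · obtain ⟨m, hmC, hm01⟩ := Set.not_subset.1 hopt
    have hm2 : 2 ≤ m := by
      simp only [Set.mem_insert_iff, Set.mem_singleton_iff] at hm01
      omega
    have hmM := h hmC
    have h0M := h hp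
    cases M with
    | star => exact fun x hx => hx
    | plus => exfalso; simp only [Mult.sem, Set.mem_setOf_eq] at h0M; omega
    | zero => exfalso; simp only [Mult.sem, Set.mem_singleton_iff] at hmM; omega
    | one => exfalso; simp only [Mult.sem, Set.mem_singleton_iff] at hmM; omega
    | opt =>
        exfalso
        simp only [Mult.sem, Set.mem_insert_iff, Set.mem_singleton_iff] at hmM
        omega
  · obtain ⟨m, hmC, hm01⟩ := Set.not_subset.1 hopt
    have hm2 : 2 ≤ m := by
      simp only [Set.mem_insert_iff, Set.mem_singleton_iff] at hm01
      omega
    have hmM := h hmC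
    cases M with
    | star => intro x _; trivial
    | plus => exact fun x hx => hx
    | zero => exfalso; simp only [Mult.sem, Set.mem_singleton_iff] at hmM; omega
    | one => exfalso; simp only [Mult.sem, Set.mem_singleton_iff] at hmM; omega
    | opt =>
        exfalso
        simp only [Mult.sem, Set.mem_insert_iff, Set.mem_singleton_iff] at hmM
        omega

/-- If `C₁` reflects the "profile" of `C₂` (membership of `0`, of `1`, and of
some number `≥ 2`), then `C₂` is contained in the semantics of the minimal
multiplicity of `C₁`. -/
theorem subset_sem_minMultSet_of_profile {C1 C2 : Set ℕ}
    (h0 : 0 ∈ C2 → 0 ∈ C1) (h1 : 1 ∈ C2 → 1 ∈ C1)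
    (h2 : (∃ n, 2 ≤ n ∧ n ∈ C2) → ∃ n, 2 ≤ n ∧ n ∈ C1) :
    C2 ⊆ Mult.sem (minMultSet C1) := by
  intro n hn
  unfold minMultSet
  split_ifs with hz ho hopt hp
  · -- C1 ⊆ {0}
    match n, hn with
    | 0, hn => rfl
    | 1, hn => exact absurd (hz (h1 hn)) one_ne_zero
    | (k+2), hn =>
        obtain ⟨m, hm2, hmC⟩ := h2 ⟨k+2, by omega, hn⟩
        have := hz hmC
        simp only [Set.mem_singleton_iff] at this
        omega
  · match n, hn with
    | 0, hn =>
        have := ho (h0 hn)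
        simp only [Set.mem_singleton_iff] at this
        omega
    | 1, hn => rfl
    | (k+2), hn =>
        obtain ⟨m, hm2, hmC⟩ := h2 ⟨k+2, by omega, hn⟩
        have := ho hmC
        simp only [Set.mem_singleton_iff] at this
        omega
  · match n, hn with
    | 0, hn => exact Or.inl rfl
    | 1, hn => exact Or.inr rfl
    | (k+2), hn =>
        obtain ⟨m, hm2, hmC⟩ := h2 ⟨k+2, by omega, hn⟩
        have := hopt hmC
        simp only [Set.mem_insert_iff, Set.mem_singleton_iff] at this
        omega
  · trivial
  · match n, hn with
    | 0, hn => exact absurd (h0 hn) hp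
    | (k+1), hn => simp [Mult.sem]

section Schema
variable [DecidableEq α]

/-- Per-symbol semantics of a disjunction-free multiplicity expression. -/
def eSem (e : MExpr α) (b : α) : Set ℕ :=
  {n | (∀ p ∈ e.entries, p.1 = b → n ∈ Mult.sem p.2) ∧
       (b ∈ e.entries.map Prod.fst ∨ n = 0)}

theorem mem_lang_iff (e : MExpr α) (w : Multiset α) :
    w ∈ e.lang ↔ ∀ b, w.count b ∈ eSem e b := by
  constructor
  · rintro ⟨hall, hz⟩ b
    refine ⟨fun p hp hpb => hpb ▸ hall p hp, ?_⟩
    by_cases hb : b ∈ e.entries.map Prod.fst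
    · exact Or.inl hb
    · exact Or.inr (hz b hb)
  · intro h
    refine ⟨fun p hp => (h p.1).1 p hp rfl, fun b hb => ?_⟩
    rcases (h b).2 with hmem | hzero
    · exact absurd hmem hb
    · exact hzero

theorem eSem_eq_sem (e : MExpr α) (b : α) : ∃ M : Mult, eSem e b = Mult.sem M := by
  by_cases hb : b ∈ e.entries.map Prod.fst
  · obtain ⟨p, hp, hpb⟩ := List.mem_map.1 hb
    refine ⟨p.2, Set.Subset.antisymm (fun n hn => hn.1 p hp hpb) (fun n hn => ⟨?_, Or.inl hb⟩)⟩
    intro q hq hqb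
    have : q = p := List.inj_on_of_nodup_map e.distinct hq hp (hqb.trans hpb.symm)
    exact this ▸ hn
  · refine ⟨.zero, Set.Subset.antisymm (fun n hn => ?_) (fun n hn => ?_)⟩
    · rcases hn.2 with hmem | hzero
      · exact absurd hmem hb
      · exact hzero
    · have hn0 : n = 0 := hn
      exact ⟨fun p hp hpb => absurd (hpb ▸ List.mem_map_of_mem (f := Prod.fst) hp) hb,
        Or.inr hn0⟩

/-- Counts of symbol `b` among the children of `a`-labeled nodes of trees in `T`. -/
def CCs (T : Set (UTree α)) (a b : α) : Set ℕ :=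
  {n | ∃ t, t ∈ T ∧ ∃ s, s ∈ nodes t ∧ s.label = a ∧ n = (childLabels s).count b}

/-- `a` occurs as a node label in some tree of `T`. -/
def occurs (T : Set (UTree α)) (a : α) : Prop :=
  ∃ t, t ∈ T ∧ ∃ s, s ∈ nodes t ∧ s.label = a

theorem CCs_mono {T1 T2 : Set (UTree α)} (h : T1 ⊆ T2) (a b : α) :
    CCs T1 a b ⊆ CCs T2 a b := by
  rintro n ⟨t, ht, s, hs, hl, hc⟩
  exact ⟨t, h ht, s, hs, hl, hc⟩

theorem CCs_nonempty {T : Set (UTree α)} {a : α} (h : occurs T a) (b : α) :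
    (CCs T a b).Nonempty := by
  obtain ⟨t, ht, s, hs, hl⟩ := h
  exact ⟨(childLabels s).count b, t, ht, s, hs, hl, rfl⟩

/-- If some `a`-node has a positive count of `b`-children, then `b` occurs. -/
theorem occurs_of_CC_pos {T : Set (UTree α)} {a b : α} {n : ℕ}
    (hn : n ∈ CCs T a b) (h1 : 1 ≤ n) : occurs T b := by
  obtain ⟨t, ht, s, hs, hl, hc⟩ := hn
  have hbmem : b ∈ childLabels s := by
    rw [← Multiset.count_pos, ← hc]; omega
  cases s with
  | node c ts =>
    simp only [childLabels, Multiset.mem_coe, List.mem_map] at hbmem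
    obtain ⟨t', ht', hlt'⟩ := hbmem
    refine ⟨t, ht, t', nodes_trans hs ?_, hlt'⟩
    exact mem_nodes_trans (self_mem_nodes t') (show t' ∈ children (UTree.node c ts) from ht')

variable [Fintype α]

/-- The minimal disjunction-free expression fitting the `a`-children of `D`. -/
noncomputable def minExpr (D : Finset (UTree α)) (a : α) : MExpr α where
  entries := Finset.univ.toList.map fun b => (b, minMultSet (CCs ↑D a b))
  distinct := by
    rw [List.map_map]
    have : (Prod.fst ∘ fun b => (b, minMultSet (CCs ↑D a b))) = id := rfl
    rw [this, List.map_id]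
    exact Finset.nodup_toList _

theorem mem_minExpr_lang (D : Finset (UTree α)) (a : α) (w : Multiset α) :
    w ∈ (minExpr D a).lang ↔ ∀ b, w.count b ∈ Mult.sem (minMultSet (CCs ↑D a b)) := by
  constructor
  · rintro ⟨hall, _⟩ b
    exact hall (b, minMultSet (CCs ↑D a b))
      (List.mem_map.2 ⟨b, Finset.mem_toList.2 (Finset.mem_univ b), rfl⟩)
  · intro h
    constructor
    · intro p hp
      obtain ⟨b, _, rfl⟩ := List.mem_map.1 hp
      exact h b
    · intro b hb
      exfalso
      apply hb
      simp only [minExpr, List.map_map]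
      have heq : (Prod.fst ∘ fun b => (b, minMultSet (CCs ↑D a b))) = id := rfl
      rw [heq, List.map_id]
      exact Finset.mem_toList.2 (Finset.mem_univ b)

/-- The minimal schema fitting `D` with root `r`. -/
noncomputable def minMS (D : Finset (UTree α)) (r : α) : MS α :=
  ⟨r, fun a => minExpr D a⟩

theorem mem_CCs {T : Set (UTree α)} {a b : α} {n : ℕ} :
    n ∈ CCs T a b ↔
      ∃ t, t ∈ T ∧ ∃ s, s ∈ nodes t ∧ s.label = a ∧ n = (childLabels s).count b :=
  Iff.rfl

/-- Every tree of `D` satisfies the rules of the minimal schema of `D`. -/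
theorem fit (D : Finset (UTree α)) (r : α) : ∀ t ∈ D, t.MSat (minMS D r).rules := by
  intro t ht
  rw [msat_iff_nodes]
  intro s hs
  rw [show (minMS D r).rules s.label = minExpr D s.label from rfl, mem_minExpr_lang]
  intro b
  exact subset_sem_minMultSet _ ⟨t, Finset.mem_coe.2 ht, s, hs, rfl, rfl⟩

/-- Every label occurring in a tree satisfying the minimal rules of `D` and
whose root label occurs in `D` also occurs in `D`. -/
theorem occurs_nodes (D : Finset (UTree α)) {t : UTree α}
    (ht : t.MSat (minMS D r).rules) (h0 : occurs ↑D t.label) :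
    ∀ s ∈ nodes t, occurs (↑D : Set (UTree α)) s.label := by
  induction t using utree_ind with
  | h a ts ih =>
    intro s hs
    rcases mem_nodes_node.1 hs with rfl | ⟨t', ht', hs'⟩
    · exact h0
    · cases ht with
      | node _ _ hmem hall =>
        have hcount : 1 ≤ ((ts.map UTree.label : List α) : Multiset α).count t'.label := by
          rw [Nat.one_le_iff_ne_zero, ← Nat.pos_iff_ne_zero, Multiset.count_pos,
            Multiset.mem_coe]
          exact List.mem_map_of_mem (f := UTree.label) ht'
        have hsem := (mem_minExpr_lang D a _).1 hmem t'.label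
        have hocc' : occurs (↑D : Set (UTree α)) t'.label := by
          by_contra hno
          have hsub : CCs ↑D a t'.label ⊆ {0} := by
            intro n hn
            by_contra hn0
            have hpos : 1 ≤ n := Nat.pos_of_ne_zero (by simpa using hn0)
            exact hno (occurs_of_CC_pos hn hpos)
          have hz := sem_minMultSet_subset (CCs_nonempty h0 t'.label) (M := .zero) hsub hsem
          simp only [Mult.sem, Set.mem_singleton_iff] at hz
          omega
        exact ih t' ht' (hall t' ht') hocc' s hs'

/-- Minimality: the minimal schema of `D` only accepts trees accepted by every
schema accepting `D`. -/
theorem min_sub {D : Finset (UTree α)} {S : MS α} {r : α}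
    (hD : ∀ t ∈ D, t.MSat S.rules) {t : UTree α}
    (hmin : t.MSat (minMS D r).rules) (hocc : occurs ↑D t.label) :
    t.MSat S.rules := by
  rw [msat_iff_nodes]
  intro s hs
  have hocs : occurs (↑D : Set (UTree α)) s.label := occurs_nodes D hmin hocc s hs
  rw [mem_lang_iff]
  intro b
  obtain ⟨M, hM⟩ := eSem_eq_sem (S.rules s.label) b
  rw [hM]
  have hsub : CCs ↑D s.label b ⊆ Mult.sem M := by
    rintro n ⟨t1, ht1, s1, hs1, hl1, rfl⟩
    have h1 := (mem_lang_iff _ _).1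
      ((msat_iff_nodes _ _).1 (hD t1 (Finset.mem_coe.1 ht1)) s1 hs1) b
    rw [hl1] at h1
    exact hM ▸ h1
  have hcount := (mem_minExpr_lang D s.label (childLabels s)).1
    ((msat_iff_nodes _ t).1 hmin s hs) b
  exact sem_minMultSet_subset (CCs_nonempty hocs b) hsub hcount

open Classical in
/-- Witness trees in `L(S)` realizing the count profile of the pair `(a, b)`. -/
noncomputable def witF (S : MS α) (a b : α) : Finset (UTree α) :=
  (if h : 0 ∈ CCs S.lang a b then {(mem_CCs.1 h).choose} else ∅) ∪
  (if h : 1 ∈ CCs S.lang a b then {(mem_CCs.1 h).choose} else ∅) ∪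
  (if h : ∃ n, 2 ≤ n ∧ n ∈ CCs S.lang a b
    then {(mem_CCs.1 h.choose_spec.2).choose} else ∅)

theorem witF_sub (S : MS α) (a b : α) : ↑(witF S a b) ⊆ S.lang := by
  intro t ht
  simp only [witF, Finset.coe_union, Set.mem_union, Finset.mem_coe] at ht
  rcases ht with (ht | ht) | ht <;> split_ifs at ht with h <;>
    simp only [Finset.mem_singleton, Finset.notMem_empty] at ht <;>
    subst ht <;>
    first
      | exact (mem_CCs.1 h).choose_spec.1
      | exact (mem_CCs.1 h.choose_spec.2).choose_spec.1

open Classical in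
theorem witF_card (S : MS α) (a b : α) : (witF S a b).card ≤ 3 := by
  unfold witF
  split_ifs <;>
    refine le_trans (Finset.card_union_le _ _)
      (le_trans (Nat.add_le_add_right (Finset.card_union_le _ _) _) ?_) <;>
    simp

theorem witF_spec0 (S : MS α) (a b : α) (h : 0 ∈ CCs S.lang a b) :
    0 ∈ CCs ↑(witF S a b) a b := by
  obtain ⟨htL, s, hs, hl, hc⟩ := (mem_CCs.1 h).choose_spec
  refine mem_CCs.2 ⟨(mem_CCs.1 h).choose, ?_, s, hs, hl, hc⟩
  simp only [witF, Finset.coe_union, Set.mem_union, Finset.mem_coe]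
  left; left
  rw [dif_pos h]
  exact Finset.mem_singleton_self _

theorem witF_spec1 (S : MS α) (a b : α) (h : 1 ∈ CCs S.lang a b) :
    1 ∈ CCs ↑(witF S a b) a b := by
  obtain ⟨htL, s, hs, hl, hc⟩ := (mem_CCs.1 h).choose_spec
  refine mem_CCs.2 ⟨(mem_CCs.1 h).choose, ?_, s, hs, hl, hc⟩
  simp only [witF, Finset.coe_union, Set.mem_union, Finset.mem_coe]
  left; right
  rw [dif_pos h]
  exact Finset.mem_singleton_self _

theorem witF_spec2 (S : MS α) (a b : α) (h : ∃ n, 2 ≤ n ∧ n ∈ CCs S.lang a b) :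
    ∃ n, 2 ≤ n ∧ n ∈ CCs ↑(witF S a b) a b := by
  obtain ⟨htL, s, hs, hl, hc⟩ := (mem_CCs.1 h.choose_spec.2).choose_spec
  refine ⟨h.choose, h.choose_spec.1, mem_CCs.2 ⟨_, ?_, s, hs, hl, hc⟩⟩
  simp only [witF, Finset.coe_union, Set.mem_union, Finset.mem_coe]
  right
  rw [dif_pos h]
  exact Finset.mem_singleton_self _

end Schema

end Learn


/-- The class MS is learnable from positive and negative
examples: the learner returns a consistent MS whenever one exists and `null`
(`none`) otherwise, and on any sample extending a characteristic sample of a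
schema `S` consistently with `S` it returns an MS with the same language. -/
theorem ms_learnable_from_positive_and_negative :
    ∃ p : Polynomial ℕ,
      ∀ (α : Type) [Fintype α] [DecidableEq α],
        ∃ learner :
            {D : Finset (UTree α) × Finset (UTree α) // D.1.Nonempty} → Option (MS α),
          (∀ D : {D : Finset (UTree α) × Finset (UTree α) // D.1.Nonempty},
              (∀ S : MS α, learner D = some S →
                  ↑D.val.1 ⊆ S.lang ∧ ∀ t ∈ D.val.2, t ∉ S.lang) ∧
              (learner D = none ↔
                  ¬ ∃ S : MS α, ↑D.val.1 ⊆ S.lang ∧ ∀ t ∈ D.val.2, t ∉ S.lang)) ∧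
          (∀ S : MS α, ∃ CS : Finset (UTree α),
              ↑CS ⊆ S.lang ∧ CS.card ≤ p.eval (Fintype.card α) ∧
              ∀ (Dp Dn : Finset (UTree α)) (hne : Dp.Nonempty),
                CS ⊆ Dp → ↑Dp ⊆ S.lang → (∀ t ∈ Dn, t ∉ S.lang) →
                ∃ S' : MS α, learner ⟨(Dp, Dn), hne⟩ = some S' ∧
                  S'.lang = S.lang) := by
  classical
  refine ⟨Polynomial.C 1 + Polynomial.C 3 * Polynomial.X ^ 2, fun α _ _ => ?_⟩
  refine ⟨fun D =>
      if h : ∃ S : MS α, ↑D.val.1 ⊆ S.lang ∧ ∀ t ∈ D.val.2, t ∉ S.lang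
      then some (Learn.minMS D.val.1 h.choose.root) else none, fun D => ?_, fun S => ?_⟩
  · constructor
    · intro S' hS'
      beta_reduce at hS'
      by_cases h : ∃ S : MS α, ↑D.val.1 ⊆ S.lang ∧ ∀ t ∈ D.val.2, t ∉ S.lang
      · rw [dif_pos h, Option.some.injEq] at hS'
        subst hS'
        obtain ⟨hpos, hneg⟩ := h.choose_spec
        constructor
        · intro t ht
          exact ⟨(hpos ht).1, Learn.fit _ _ t (Finset.mem_coe.1 ht)⟩
        · rintro t htn ⟨hroot, hmsat⟩
          obtain ⟨t1, ht1⟩ := D.property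
          have ht1S := hpos (Finset.mem_coe.2 ht1)
          have hocc : Learn.occurs (↑D.val.1 : Set (UTree α)) t.label :=
            ⟨t1, Finset.mem_coe.2 ht1, t1, Learn.self_mem_nodes t1, by
              rw [ht1S.1]; exact hroot.symm⟩
          have hsat := Learn.min_sub
            (fun t' ht' => (hpos (Finset.mem_coe.2 ht')).2) hmsat hocc
          exact hneg t htn ⟨hroot, hsat⟩
      · rw [dif_neg h] at hS'
        cases hS'
    · beta_reduce
      by_cases h : ∃ S : MS α, ↑D.val.1 ⊆ S.lang ∧ ∀ t ∈ D.val.2, t ∉ S.lang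
      · rw [dif_pos h]
        simp [h]
      · rw [dif_neg h]
        simp [h]
  · by_cases hE : ∃ t0, t0 ∈ S.lang
    · obtain ⟨t0, ht0⟩ := hE
      refine ⟨insert t0 ((Finset.univ ×ˢ Finset.univ).biUnion
          fun p : α × α => Learn.witF S p.1 p.2), ?_, ?_, ?_⟩
      · intro t ht
        simp only [Finset.coe_insert, Set.mem_insert_iff, Finset.mem_coe,
          Finset.mem_biUnion] at ht
        rcases ht with rfl | ⟨p, _, hp⟩
        · exact ht0
        · exact Learn.witF_sub S p.1 p.2 (Finset.mem_coe.2 hp)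
      · refine le_trans (Finset.card_insert_le _ _) ?_
        have h1 := Finset.card_biUnion_le (s := Finset.univ ×ˢ Finset.univ)
          (t := fun p : α × α => Learn.witF S p.1 p.2)
        have h2 : ∑ p ∈ Finset.univ ×ˢ Finset.univ, (Learn.witF S p.1 p.2).card ≤
            ∑ _p ∈ (Finset.univ ×ˢ Finset.univ : Finset (α × α)), 3 :=
          Finset.sum_le_sum fun p _ => Learn.witF_card S p.1 p.2
        have h3 : (Finset.univ ×ˢ Finset.univ : Finset (α × α)).card =
            Fintype.card α * Fintype.card α := by
          simp [Finset.card_product]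
        have h4 : ∑ _p ∈ (Finset.univ ×ˢ Finset.univ : Finset (α × α)), 3 =
            (Finset.univ ×ˢ Finset.univ : Finset (α × α)).card * 3 := by
          rw [Finset.sum_const, smul_eq_mul]
        have heval : (Polynomial.C 1 + Polynomial.C 3 * Polynomial.X ^ 2).eval
            (Fintype.card α) = 1 + 3 * (Fintype.card α * Fintype.card α) := by
          simp [pow_two]
        rw [heval]
        omega
      · intro Dp Dn hne hCS hDp hDn
        have hcons : ∃ S' : MS α, ↑Dp ⊆ S'.lang ∧ ∀ t ∈ Dn, t ∉ S'.lang := ⟨S, hDp, hDn⟩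
        have ht0Dp : t0 ∈ Dp := hCS (Finset.mem_insert_self _ _)
        have hroot0 : hcons.choose.root = S.root := by
          have h1 : t0 ∈ hcons.choose.lang := hcons.choose_spec.1 (Finset.mem_coe.2 ht0Dp)
          rw [← h1.1, ht0.1]
        refine ⟨Learn.minMS Dp hcons.choose.root, by beta_reduce; rw [dif_pos hcons], ?_⟩
        apply Set.Subset.antisymm
        · rintro t ⟨hr, hmsat⟩
          have hocc : Learn.occurs (↑Dp : Set (UTree α)) t.label :=
            ⟨t0, Finset.mem_coe.2 ht0Dp, t0, Learn.self_mem_nodes t0, by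
              rw [ht0.1, hr]; exact hroot0.symm⟩
          exact ⟨hr.trans hroot0,
            Learn.min_sub (fun t' ht' => (hDp (Finset.mem_coe.2 ht')).2) hmsat hocc⟩
        · rintro t ⟨hl, hsat⟩
          refine ⟨by rw [hl]; exact hroot0.symm, ?_⟩
          rw [Learn.msat_iff_nodes]
          intro s hs
          rw [show (Learn.minMS Dp hcons.choose.root).rules s.label =
            Learn.minExpr Dp s.label from rfl, Learn.mem_minExpr_lang]
          intro b
          have hstar : (Learn.childLabels s).count b ∈ Learn.CCs S.lang s.label b :=
            ⟨t, ⟨hl, hsat⟩, s, hs, rfl, rfl⟩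
          have hwsub : ↑(Learn.witF S s.label b) ⊆ (↑Dp : Set (UTree α)) := by
            refine Finset.coe_subset.2 (Finset.Subset.trans ?_ hCS)
            refine Finset.Subset.trans
              (Finset.subset_biUnion_of_mem (x := (s.label, b)) (fun p : α × α => Learn.witF S p.1 p.2)
                (Finset.mem_product.2 ⟨Finset.mem_univ s.label, Finset.mem_univ b⟩)) ?_
            exact Finset.subset_insert _ _
          refine Learn.subset_sem_minMultSet_of_profile ?_ ?_ ?_ hstar
          · intro h
            exact Learn.CCs_mono hwsub _ _ (Learn.witF_spec0 S s.label b h)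
          · intro h
            exact Learn.CCs_mono hwsub _ _ (Learn.witF_spec1 S s.label b h)
          · intro h
            obtain ⟨n, hn2, hn⟩ := Learn.witF_spec2 S s.label b h
            exact ⟨n, hn2, Learn.CCs_mono hwsub _ _ hn⟩
    · refine ⟨∅, by simp, by simp, ?_⟩
      intro Dp Dn hne hCS hDp hDn
      exact absurd ⟨hne.choose, hDp (Finset.mem_coe.2 hne.choose_spec)⟩ hE

end LSXML
end

section
/- For every finite alphabet Σ and every finite nonempty set D of trees over Σ all having the same root label r, there exists an MS S over Σ with root label r such that D ⊆ L(S) and for every MS S' over Σ with D ⊆ L(S') one has L(S) ⊆ L(S'); moreover any two such minimum MS have equal languages, i.e., the minimal MS consistent with D is unique. -/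
namespace LSXML

section MinAux

/-- The smallest multiplicity whose semantics contains all elements of `l`
(for nonempty `l`). -/
def minMult (l : List ℕ) : Mult :=
  if l.any (fun n => 2 ≤ n) then (if 0 ∈ l then .star else .plus)
  else if 0 ∈ l then (if 1 ∈ l then .opt else .zero)
  else .one

lemma mem_sem_minMult {l : List ℕ} {n : ℕ} (hn : n ∈ l) : n ∈ (minMult l).sem := by
  unfold minMult
  split_ifs with h1 h2 h3 h4
  · simp [Mult.sem]
  · have : n ≠ 0 := fun h => h2 (h ▸ hn)
    simpa [Mult.sem] using Nat.one_le_iff_ne_zero.mpr this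
  · have hlt : n < 2 := by
      by_contra h
      exact h1 (List.any_eq_true.mpr ⟨n, hn, by simpa using Nat.not_lt.mp h⟩)
    interval_cases n <;> simp [Mult.sem]
  · have hlt : n < 2 := by
      by_contra h
      exact h1 (List.any_eq_true.mpr ⟨n, hn, by simpa using Nat.not_lt.mp h⟩)
    have hn1 : n ≠ 1 := fun h => h4 (h ▸ hn)
    have : n = 0 := by omega
    simp [Mult.sem, this]
  · have hlt : n < 2 := by
      by_contra h
      exact h1 (List.any_eq_true.mpr ⟨n, hn, by simpa using Nat.not_lt.mp h⟩)
    have hn0 : n ≠ 0 := fun h => h3 (h ▸ hn)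
    have : n = 1 := by omega
    simp [Mult.sem, this]

lemma sem_minMult_subset {l : List ℕ} (hne : l ≠ []) {M : Mult}
    (h : ∀ n ∈ l, n ∈ M.sem) : (minMult l).sem ⊆ M.sem := by
  obtain ⟨x, hx⟩ := List.exists_mem_of_ne_nil l hne
  cases M with
  | star => simp [Mult.sem]
  | plus =>
      have h0 : 0 ∉ l := fun hm => by simpa [Mult.sem] using h 0 hm
      unfold minMult
      split_ifs <;> simp_all [Mult.sem] <;> omega
  | opt =>
      have hno : ¬ l.any (fun n => 2 ≤ n) = true := by
        simp only [List.any_eq_true, not_exists, not_and]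
        intro n hn
        have := h n hn
        simp [Mult.sem] at this
        rcases this with h' | h' <;> simp [h']
      unfold minMult
      split_ifs <;> simp_all [Mult.sem] <;> intro y hy <;> simp [hy]
  | one =>
      have h1 : ∀ n ∈ l, n = 1 := fun n hn => by simpa [Mult.sem] using h n hn
      have hno : ¬ l.any (fun n => 2 ≤ n) = true := by
        simp only [List.any_eq_true, not_exists, not_and]
        intro n hn; simp [h1 n hn]
      have h0 : 0 ∉ l := fun hm => by simpa using h1 0 hm
      unfold minMult
      split_ifs <;> simp_all [Mult.sem]
  | zero =>
      have h1 : ∀ n ∈ l, n = 0 := fun n hn => by simpa [Mult.sem] using h n hn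
      have hno : ¬ l.any (fun n => 2 ≤ n) = true := by
        simp only [List.any_eq_true, not_exists, not_and]
        intro n hn; simp [h1 n hn]
      have h0 : 0 ∈ l := (h1 x hx) ▸ hx
      have h1' : 1 ∉ l := fun hm => by simpa using h1 1 hm
      unfold minMult
      split_ifs <;> simp_all [Mult.sem]

lemma pos_mem_minMult {l : List ℕ} (hne : l ≠ []) {n : ℕ}
    (hn : n ∈ (minMult l).sem) (hpos : 1 ≤ n) : ∃ m ∈ l, 1 ≤ m := by
  by_contra hc
  push_neg at hc
  have hz : ∀ m ∈ l, m ∈ Mult.sem .zero := by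
    intro m hm
    have := hc m hm
    simp [Mult.sem]; omega
  have := sem_minMult_subset hne hz hn
  simp [Mult.sem] at this
  omega

end MinAux

section TreeAux

variable {α : Type}

/-- Structural induction principle for unordered trees. -/
lemma UTree.ind' {motive : UTree α → Prop}
    (h : ∀ a ts, (∀ s ∈ ts, motive s) → motive (.node a ts)) :
    ∀ t, motive t
  | .node a ts => h a ts (fun s hs => UTree.ind' h s)
  decreasing_by
    have := List.sizeOf_lt_of_mem hs
    simp only [UTree.node.sizeOf_spec]
    omega

/-- The list of pairs (label, children-label multiset) of all nodes of a tree. -/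
def UTree.nodes : UTree α → List (α × Multiset α)
  | .node a ts => (a, ((ts.map UTree.label : List α) : Multiset α)) ::
      (ts.attach.flatMap fun s => s.1.nodes)
  decreasing_by
    have := List.sizeOf_lt_of_mem s.2
    simp only [UTree.node.sizeOf_spec]
    omega

lemma UTree.mem_nodes_node {p : α × Multiset α} {a : α} {ts : List (UTree α)} :
    p ∈ (UTree.node a ts).nodes ↔
      p = (a, ((ts.map UTree.label : List α) : Multiset α)) ∨ ∃ s ∈ ts, p ∈ s.nodes := by
  simp [UTree.nodes, List.mem_flatMap]

lemma UTree.msat_iff_nodes [DecidableEq α] {R : α → MExpr α} :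
    ∀ t : UTree α, t.MSat R ↔ ∀ p ∈ t.nodes, p.2 ∈ (R p.1).lang := by
  refine UTree.ind' ?_
  intro a ts ih
  constructor
  · rintro hsat p hp
    cases hsat with
    | node _ _ hw hch =>
      rcases UTree.mem_nodes_node.mp hp with rfl | ⟨s, hs, hps⟩
      · exact hw
      · exact (ih s hs).mp (hch s hs) p hps
  · intro h
    refine UTree.MSat.node a ts (h _ (UTree.mem_nodes_node.mpr (Or.inl rfl))) ?_
    intro s hs
    exact (ih s hs).mpr fun p hp => h p (UTree.mem_nodes_node.mpr (Or.inr ⟨s, hs, hp⟩))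

lemma UTree.child_node : ∀ (t : UTree α) (a : α) (u : Multiset α),
    (a, u) ∈ t.nodes → ∀ b ∈ u, ∃ u', (b, u') ∈ t.nodes := by
  refine UTree.ind' ?_
  rintro a₀ ts ih a u hu b hb
  rcases UTree.mem_nodes_node.mp hu with heq | ⟨s, hs, hps⟩
  · rw [Prod.mk.injEq] at heq
    obtain ⟨rfl, rfl⟩ := heq
    rw [Multiset.mem_coe, List.mem_map] at hb
    obtain ⟨s, hs, rfl⟩ := hb
    obtain ⟨bs, cs⟩ := s
    exact ⟨_, UTree.mem_nodes_node.mpr (Or.inr ⟨_, hs,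
      UTree.mem_nodes_node.mpr (Or.inl rfl)⟩)⟩
  · obtain ⟨u', hu'⟩ := ih s hs a u hps b hb
    exact ⟨u', UTree.mem_nodes_node.mpr (Or.inr ⟨s, hs, hu'⟩)⟩

end TreeAux

section Construction

variable {α : Type} [DecidableEq α] [Fintype α]

/-- All (label, children-labels) pairs over all trees of `D`. -/
noncomputable def allNodes (D : Finset (UTree α)) : List (α × Multiset α) :=
  D.toList.flatMap UTree.nodes

/-- The children-label multisets of all `a`-labeled nodes in trees of `D`. -/
noncomputable def occ (D : Finset (UTree α)) (a : α) : List (Multiset α) :=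
  ((allNodes D).filter fun p => decide (p.1 = a)).map Prod.snd

lemma mem_occ {D : Finset (UTree α)} {a : α} {u : Multiset α} :
    u ∈ occ D a ↔ ∃ t ∈ D, (a, u) ∈ t.nodes := by
  simp only [occ, allNodes, List.mem_map, List.mem_filter, List.mem_flatMap,
    decide_eq_true_eq, Finset.mem_toList]
  constructor
  · rintro ⟨⟨a', u'⟩, ⟨⟨t, htD, hn⟩, rfl⟩, rfl⟩
    exact ⟨t, htD, hn⟩
  · rintro ⟨t, htD, hn⟩
    exact ⟨(a, u), ⟨⟨t, htD, hn⟩, rfl⟩, rfl⟩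

/-- The rule of the minimal schema for symbol `a`. -/
noncomputable def minRule (D : Finset (UTree α)) (a : α) : MExpr α :=
  ⟨(Finset.univ.toList).map fun b => (b, minMult ((occ D a).map fun w => w.count b)),
   by
     have : ((Finset.univ.toList (α := α)).map
         fun b => (b, minMult ((occ D a).map fun w => w.count b))).map Prod.fst
         = Finset.univ.toList := by
       rw [List.map_map]
       simp only [Function.comp_def]
       exact List.map_id' _
     rw [this]
     exact Finset.nodup_toList _⟩

lemma mem_minRule_lang {D : Finset (UTree α)} {a : α} {w : Multiset α} :
    w ∈ (minRule D a).lang ↔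
      ∀ b : α, w.count b ∈ (minMult ((occ D a).map fun u => u.count b)).sem := by
  constructor
  · intro h b
    exact h.1 (b, minMult ((occ D a).map fun u => u.count b))
      (List.mem_map.mpr ⟨b, Finset.mem_toList.mpr (Finset.mem_univ b), rfl⟩)
  · intro h
    constructor
    · intro p hp
      obtain ⟨b, -, rfl⟩ := List.mem_map.mp hp
      exact h b
    · intro b hb
      exact absurd (by
        simp only [minRule, List.map_map, Function.comp_def, List.map_id']
        exact Finset.mem_toList.mpr (Finset.mem_univ b)) hb

lemma occ_ne_nil_of_mem {D : Finset (UTree α)} {a : α} {u : Multiset α}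
    (h : u ∈ occ D a) : occ D a ≠ [] := List.ne_nil_of_mem h

/-- Part 1: every tree of `D` satisfies the minimal schema. -/
lemma D_subset_min {D : Finset (UTree α)} {t : UTree α} (ht : t ∈ D) :
    t.MSat (minRule D) := by
  rw [UTree.msat_iff_nodes]
  rintro ⟨a, u⟩ hp
  rw [mem_minRule_lang]
  intro b
  have hu : u ∈ occ D a := mem_occ.mpr ⟨t, ht, hp⟩
  exact mem_sem_minMult (List.mem_map.mpr ⟨u, hu, rfl⟩)

/-- Part 2: minimality. -/
lemma min_subset {D : Finset (UTree α)} {S' : MS α} (hD' : ↑D ⊆ S'.lang) :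
    ∀ t : UTree α, t.MSat (minRule D) → occ D t.label ≠ [] → t.MSat S'.rules := by
  have hocc : ∀ a : α, ∀ u ∈ occ D a, u ∈ (S'.rules a).lang := by
    intro a u hu
    obtain ⟨t, htD, hn⟩ := mem_occ.mp hu
    exact (UTree.msat_iff_nodes t).mp (hD' htD).2 (a, u) hn
  refine UTree.ind' ?_
  intro a ts ih hsat hoc
  simp only [UTree.label] at hoc
  cases hsat with
  | node _ _ hw hch =>
    have hw' := mem_minRule_lang.mp hw
    have hmapne : ∀ b : α, ((occ D a).map fun u => u.count b) ≠ [] := by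
      intro b h
      exact hoc (List.map_eq_nil_iff.mp h)
    refine UTree.MSat.node a ts ?_ ?_
    · constructor
      · intro p hp
        refine sem_minMult_subset (hmapne p.1) ?_ (hw' p.1)
        rintro n hn
        obtain ⟨u, hu, rfl⟩ := List.mem_map.mp hn
        exact (hocc a u hu).1 p hp
      · intro b hb
        have : ((ts.map UTree.label : List α) : Multiset α).count b ∈ Mult.sem .zero := by
          refine sem_minMult_subset (hmapne b) ?_ (hw' b)
          rintro n hn
          obtain ⟨u, hu, rfl⟩ := List.mem_map.mp hn
          have := (hocc a u hu).2 b hb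
          simpa [Mult.sem] using this
        simpa [Mult.sem] using this
    · intro s hs
      refine ih s hs (hch s hs) ?_
      -- s.label occurs in D
      have hmem : s.label ∈ ((ts.map UTree.label : List α) : Multiset α) := by
        rw [Multiset.mem_coe, List.mem_map]; exact ⟨s, hs, rfl⟩
      have hcnt : 1 ≤ ((ts.map UTree.label : List α) : Multiset α).count s.label :=
        Multiset.one_le_count_iff_mem.mpr hmem
      obtain ⟨m, hm, hm1⟩ := pos_mem_minMult (hmapne s.label) (hw' s.label) hcnt
      obtain ⟨u, hu, rfl⟩ := List.mem_map.mp hm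
      have hbu : s.label ∈ u := Multiset.one_le_count_iff_mem.mp hm1
      obtain ⟨t', ht'D, hn'⟩ := mem_occ.mp hu
      obtain ⟨u', hu'⟩ := UTree.child_node t' a u hn' s.label hbu
      exact occ_ne_nil_of_mem (mem_occ.mpr ⟨t', ht'D, hu'⟩)

end Construction

/-- For every finite nonempty set of trees with a common root
label there is a minimum consistent MS, and it is unique up to equality of
languages. -/
theorem exists_unique_minimum_consistent_ms (α : Type) [Fintype α] [DecidableEq α]
    (r : α) (D : Finset (UTree α)) (hne : D.Nonempty)
    (hroot : ∀ t ∈ D, t.label = r) :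
    (∃ S : MS α, S.root = r ∧ ↑D ⊆ S.lang ∧
        ∀ S' : MS α, ↑D ⊆ S'.lang → S.lang ⊆ S'.lang) ∧
    (∀ S₁ S₂ : MS α,
        (↑D ⊆ S₁.lang ∧ ∀ S' : MS α, ↑D ⊆ S'.lang → S₁.lang ⊆ S'.lang) →
        (↑D ⊆ S₂.lang ∧ ∀ S' : MS α, ↑D ⊆ S'.lang → S₂.lang ⊆ S'.lang) →
        S₁.lang = S₂.lang) := by
  constructor
  · obtain ⟨t₀, ht₀⟩ := hne
    have hocr : occ D r ≠ [] := by
      obtain ⟨a0, ts0⟩ := t₀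
      have ha0 : a0 = r := hroot _ ht₀
      subst ha0
      exact occ_ne_nil_of_mem (mem_occ.mpr ⟨_, ht₀,
        UTree.mem_nodes_node.mpr (Or.inl rfl)⟩)
    refine ⟨⟨r, minRule D⟩, rfl, ?_, ?_⟩
    · intro t ht
      have ht' : t ∈ D := Finset.mem_coe.mp ht
      exact ⟨hroot t ht', D_subset_min ht'⟩
    · rintro S' hD' t ⟨hlab, hsat⟩
      have hr' : S'.root = r := by
        have h0 : t₀ ∈ S'.lang := hD' (Finset.mem_coe.mpr ht₀)
        rw [← h0.1, hroot t₀ ht₀]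
      exact ⟨hlab.trans hr'.symm, min_subset hD' t hsat (by rw [hlab]; exact hocr)⟩
  · intro S₁ S₂ h1 h2
    exact Set.Subset.antisymm (h1.2 S₂ h2.1) (h2.2 S₁ h1.1)

end LSXML
end

section
/- Let φ be a 3CNF formula with clauses c₁,…,c_k over variables x₁,…,x_n, Σ = {t₁,f₁,…,t_n,f_n}, and let D_φ be the sample of labeled unordered words defined from φ as in the reduction. For a valuation V : {x₁,…,x_n} → {true, false}, define the DME E_V = (v₁ | ⋯ | v_n)⁺ ∥ v̄₁^? ∥ ⋯ ∥ v̄_n^?, where v_i = t_i and v̄_i = f_i if V(x_i) = true, and v_i = f_i and v̄_i = t_i otherwise. Then V satisfies φ if and only if E_V is consistent with D_φ, i.e., every positive example of D_φ belongs to L(E_V) and no negative example of D_φ belongs to L(E_V). -/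
namespace LSXML

/-- Alphabet of the reduction: `t_i = (i, true)`, `f_i = (i, false)`. -/
abbrev Sym (n : ℕ) := Fin n × Bool

/-- A 3CNF clause over variables `x₁, …, x_n`: three literals, each a variable
index together with a sign (`true` = positive literal). -/
abbrev Clause (n : ℕ) := Fin 3 → Fin n × Bool

/-- A valuation satisfies a clause iff it makes some literal true. -/
def clauseSat {n : ℕ} (V : Fin n → Bool) (c : Clause n) : Prop :=
  ∃ j : Fin 3, V (c j).1 = (c j).2

/-- The positive example `t₁f₁⋯t_nf_n` (every symbol exactly once). -/
def wAll (n : ℕ) : Multiset (Sym n) := (Finset.univ : Finset (Sym n)).val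

/-- The positive example `t_i f_i`. -/
def wPair {n : ℕ} (i : Fin n) : Multiset (Sym n) := {(i, true), (i, false)}

/-- The negative example `t_i t_i f_i f_i`. -/
def wTTFF {n : ℕ} (i : Fin n) : Multiset (Sym n) :=
  {(i, true), (i, true), (i, false), (i, false)}

/-- The negative example `w_j = v_{j1}v_{j1}v_{j2}v_{j2}v_{j3}v_{j3}` of a
clause: `v_{jl} = t_{jl}` if the `l`-th literal is negative, `f_{jl}` if it is
positive, i.e. `v_{jl} = (x_{jl}, !s_{jl})`. -/
def wClause {n : ℕ} (c : Clause n) : Multiset (Sym n) :=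
  ∑ j : Fin 3, Multiset.replicate 2 (((c j).1, !(c j).2) : Sym n)

/-- The DME `E_V = (v₁ | ⋯ | v_n)⁺ ∥ v̄₁^? ∥ ⋯ ∥ v̄_n^?` of a valuation `V`,
where `v_i = t_i, v̄_i = f_i` if `V x_i = true`, and `v_i = f_i, v̄_i = t_i`
otherwise; concretely `v_i = (i, V i)` and `v̄_i = (i, !V i)`. -/
def EV {n : ℕ} (hn : 0 < n) (V : Fin n → Bool) : DME (Sym n) where
  factors :=
    ((List.finRange n).map fun i => (((i, V i) : Sym n), Mult.one), Mult.plus) ::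
    ((List.finRange n).map fun i => ([(((i, !V i) : Sym n), Mult.opt)], Mult.one))
  nonemptyDisj := by
    intro d hd
    simp only [List.mem_cons, List.mem_map] at hd
    rcases hd with rfl | ⟨i, _, rfl⟩
    · simp only [ne_eq, List.map_eq_nil_iff, List.finRange_eq_nil_iff]
      omega
    · simp
  distinct := by
    have heq : (((List.finRange n).map fun i =>
          ([(((i, !V i) : Sym n), Mult.opt)], Mult.one)).flatMap
          fun d => d.1.map Prod.fst) =
        (List.finRange n).map fun i => ((i, !V i) : Sym n) := by
      rw [List.flatMap_map]
      exact List.flatMap_pure_eq_map (fun i => ((i, !V i) : Sym n)) (List.finRange n)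
    simp only [List.flatMap_cons, List.map_map, heq]
    rw [List.nodup_append]
    refine ⟨?_, ?_, ?_⟩
    · exact (List.nodup_finRange n).map fun a b h => congrArg Prod.fst h
    · exact (List.nodup_finRange n).map fun a b h => congrArg Prod.fst h
    · intro p hp q hq hpq
      subst hpq
      simp only [List.mem_map, Function.comp] at hp hq
      obtain ⟨i, _, rfl⟩ := hp
      obtain ⟨j, _, hj⟩ := hq
      rw [Prod.mk.injEq] at hj
      obtain ⟨rfl, hb⟩ := hj
      cases V j <;> simp_all

lemma powLang_one {α : Type} (L : Set (Multiset α)) : powLang L Mult.one = L := by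
  ext w
  constructor
  · rintro ⟨ws, hlen, hmem, rfl⟩
    simp only [Mult.sem, Set.mem_singleton_iff] at hlen
    rw [List.length_eq_one_iff] at hlen
    obtain ⟨u, rfl⟩ := hlen
    simpa using hmem u (by simp)
  · intro hw
    exact ⟨[w], by simp [Mult.sem], by simpa, by simp⟩

lemma disjLang_single_opt {α : Type} (a : α) :
    disjLang [(a, Mult.opt)] = {0, ({a} : Multiset α)} := by
  ext w
  simp only [disjLang, atomLang, Mult.sem, List.mem_singleton, Set.mem_setOf_eq,
    Set.mem_insert_iff, Set.mem_singleton_iff]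
  constructor
  · rintro ⟨p, rfl, i, hi, rfl⟩
    rcases hi with rfl | rfl
    · simp
    · simp
  · rintro (rfl | rfl)
    · exact ⟨(a, Mult.opt), rfl, 0, Or.inl rfl, by simp⟩
    · exact ⟨(a, Mult.opt), rfl, 1, Or.inr rfl, by simp⟩

lemma concatLang_opts {α : Type} [DecidableEq α] (l : List α) :
    concatLang (l.map fun a => ({0, ({a} : Multiset α)} : Set (Multiset α))) =
      {v | v ≤ (l : Multiset α)} := by
  induction l with
  | nil =>
    ext v
    simp only [List.map_nil, concatLang, Set.mem_singleton_iff, Set.mem_setOf_eq]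
    exact ⟨fun h => h ▸ le_refl 0, fun h => Multiset.le_zero.mp (by simpa using h)⟩
  | cons a t ih =>
    ext v
    simp only [List.map_cons, concatLang, ih, Set.mem_setOf_eq]
    constructor
    · rintro ⟨u, hu, w, hw, rfl⟩
      rcases hu with rfl | rfl
      · rw [zero_add]
        exact le_trans hw (by
          rw [show ((a :: t : List α) : Multiset α) = a ::ₘ (t : Multiset α) from rfl]
          exact Multiset.le_cons_self _ a)
      · rw [Multiset.singleton_add]
        simpa using Multiset.cons_le_cons a hw
    · intro hv
      by_cases ha : a ∈ v
      · refine ⟨{a}, Or.inr rfl, v.erase a, ?_, ?_⟩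
        · have := Multiset.erase_le_erase a hv
          simpa using this
        · rw [Multiset.singleton_add, Multiset.cons_erase ha]
      · refine ⟨0, Or.inl rfl, v, ?_, (zero_add v).symm⟩
        rw [Multiset.le_iff_count]
        intro b
        by_cases hb : b = a
        · subst hb
          simp [Multiset.count_eq_zero_of_notMem ha]
        · have := Multiset.count_le_of_le b hv
          simpa [Multiset.count_cons, List.count_cons, hb, Ne.symm hb] using this

lemma sum_singletons {α : Type} (l : List α) :
    (l.map fun a => ({a} : Multiset α)).sum = (l : Multiset α) := by
  induction l with
  | nil => simp
  | cons a t ih => simp [ih, Multiset.singleton_add]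

lemma mem_powLang_plus_singletons {α : Type} (S : Set α) (u : Multiset α) :
    u ∈ powLang {w | ∃ a ∈ S, w = ({a} : Multiset α)} Mult.plus ↔
      u ≠ 0 ∧ ∀ a ∈ u, a ∈ S := by
  constructor
  · rintro ⟨ws, hlen, hmem, rfl⟩
    have key : ∀ ws : List (Multiset α), (∀ w ∈ ws, ∃ a ∈ S, w = ({a} : Multiset α)) →
        (∀ a ∈ ws.sum, a ∈ S) ∧ Multiset.card ws.sum = ws.length := by
      intro ws
      induction ws with
      | nil => simp
      | cons w t ih =>
        intro h
        obtain ⟨a, ha, rfl⟩ := h w (by simp)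
        obtain ⟨h1, h2⟩ := ih fun w hw => h w (by simp [hw])
        refine ⟨?_, by simp [h2]⟩
        intro b hb
        simp only [List.sum_cons, Multiset.mem_add, Multiset.mem_singleton] at hb
        rcases hb with rfl | hb
        · exact ha
        · exact h1 b hb
    obtain ⟨h1, h2⟩ := key ws hmem
    refine ⟨fun h0 => ?_, h1⟩
    rw [h0] at h2
    simp only [Mult.sem, Set.mem_setOf_eq] at hlen
    simp at h2
    omega
  · rintro ⟨h0, hS⟩
    refine ⟨u.toList.map fun a => ({a} : Multiset α), ?_, ?_, ?_⟩
    · simp only [Mult.sem, List.length_map, Multiset.length_toList, Set.mem_setOf_eq]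
      exact Multiset.card_pos.mpr h0
    · rintro w hw
      simp only [List.mem_map] at hw
      obtain ⟨a, ha, rfl⟩ := hw
      exact ⟨a, hS a (by rwa [← Multiset.mem_toList]), rfl⟩
    · rw [sum_singletons, Multiset.coe_toList]

lemma disjLang_ones {α : Type} (l : List α) :
    disjLang (l.map fun a => (a, Mult.one)) = {w | ∃ a ∈ l, w = ({a} : Multiset α)} := by
  ext w
  simp only [disjLang, atomLang, Mult.sem, Set.mem_setOf_eq, List.mem_map,
    Set.mem_singleton_iff]
  constructor
  · rintro ⟨p, ⟨a, ha, rfl⟩, i, rfl, rfl⟩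
    exact ⟨a, ha, by simp⟩
  · rintro ⟨a, ha, rfl⟩
    exact ⟨(a, Mult.one), ⟨a, ha, rfl⟩, 1, rfl, by simp⟩

lemma mem_EV {n : ℕ} (hn : 0 < n) (V : Fin n → Bool) (w : Multiset (Sym n)) :
    w ∈ (EV hn V).lang ↔
      (∀ i : Fin n, w.count (i, !V i) ≤ 1) ∧ ∃ a ∈ w, a.2 = V a.1 := by
  have hmap1 : ((List.finRange n).map fun i => ((((i : Fin n), V i) : Sym n), Mult.one)) =
      ((List.finRange n).map fun i => (((i : Fin n), V i) : Sym n)).map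
        (fun a => (a, Mult.one)) := by
    rw [List.map_map]
    rfl
  have hlang : (EV hn V).lang =
      {w | ∃ u, (u ≠ 0 ∧ ∀ a ∈ u, a ∈ (List.finRange n).map fun i => (((i : Fin n), V i) : Sym n)) ∧
        ∃ v ∈ {v : Multiset (Sym n) |
            v ≤ (((List.finRange n).map fun i => (((i : Fin n), !V i) : Sym n) : List (Sym n)) : Multiset (Sym n))},
          w = u + v} := by
    show concatLang _ = _
    simp only [EV, List.map_cons, List.map_map]
    rw [show ((List.finRange n).map
        ((fun d : List (Sym n × Mult) × Mult => powLang (disjLang d.1) d.2) ∘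
          fun i => ([((((i : Fin n), !V i) : Sym n), Mult.opt)], Mult.one))) =
        (((List.finRange n).map fun i => (((i : Fin n), !V i) : Sym n)).map
          fun a => ({0, ({a} : Multiset (Sym n))} : Set (Multiset (Sym n)))) by
      rw [List.map_map]
      apply List.map_congr_left
      intro i _
      simp only [Function.comp]
      rw [powLang_one, disjLang_single_opt]]
    show concatLang (_ :: _) = _
    simp only [concatLang]
    simp only [concatLang_opts]
    ext x
    simp only [Set.mem_setOf_eq]
    constructor
    · rintro ⟨u, hu, v, hv, rfl⟩
      rw [hmap1, disjLang_ones] at hu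
      exact ⟨u, (mem_powLang_plus_singletons
        {a : Sym n | a ∈ (List.finRange n).map fun i => (((i : Fin n), V i) : Sym n)} u).mp hu,
        v, hv, rfl⟩
    · rintro ⟨u, hu, v, hv, rfl⟩
      refine ⟨u, ?_, v, hv, rfl⟩
      rw [hmap1, disjLang_ones]
      exact (mem_powLang_plus_singletons
        {a : Sym n | a ∈ (List.finRange n).map fun i => (((i : Fin n), V i) : Sym n)} u).mpr hu
  rw [hlang]
  simp only [Set.mem_setOf_eq]
  constructor
  · rintro ⟨u, ⟨hu0, huV⟩, v, hv, rfl⟩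
    constructor
    · intro i
      rw [Multiset.count_add]
      have hcu : u.count (i, !V i) = 0 := by
        rw [Multiset.count_eq_zero]
        intro hmem
        obtain ⟨j, _, hj⟩ := List.mem_map.mp (huV _ hmem)
        rw [Prod.mk.injEq] at hj
        obtain ⟨rfl, hb⟩ := hj
        simp at hb
      have hcv : v.count (i, !V i) ≤ 1 := by
        refine le_trans (Multiset.count_le_of_le _ hv) ?_
        rw [Multiset.coe_count]
        apply (@List.nodup_iff_count_le_one _ instBEqOfDecidableEq _ _).mp
        exact (List.nodup_finRange n).map fun a b h => congrArg Prod.fst h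
      omega
    · obtain ⟨a, ha⟩ := Multiset.exists_mem_of_ne_zero hu0
      obtain ⟨j, _, hj⟩ := List.mem_map.mp (huV _ ha)
      refine ⟨a, Multiset.mem_add.mpr (Or.inl ha), ?_⟩
      rw [← hj]
  · rintro ⟨hcnt, a, haw, haV⟩
    classical
    refine ⟨w.filter (fun a => a.2 = V a.1), ⟨?_, ?_⟩,
      w.filter (fun a => ¬(a.2 = V a.1)), ?_, (Multiset.filter_add_not _ w).symm⟩
    · intro h0
      have : a ∈ w.filter (fun a => a.2 = V a.1) := Multiset.mem_filter.mpr ⟨haw, haV⟩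
      rw [h0] at this
      simp at this
    · intro b hb
      obtain ⟨-, hb2⟩ := Multiset.mem_filter.mp hb
      exact List.mem_map.mpr ⟨b.1, List.mem_finRange _, by rw [← hb2]⟩
    · rw [Multiset.le_iff_count]
      intro b
      by_cases hb : b.2 = V b.1
      · rw [Multiset.count_eq_zero_of_notMem]
        · exact Nat.zero_le _
        · intro hmem
          exact (Multiset.mem_filter.mp hmem).2 hb
      · have hb2 : b = (b.1, !V b.1) := by
          have h1 : b = (b.1, b.2) := rfl
          rw [h1, Prod.mk.injEq]
          exact ⟨rfl, Bool.eq_not_iff.mpr hb⟩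
        have h1 : Multiset.count b ↑((List.finRange n).map
            fun i => (((i : Fin n), !V i) : Sym n)) = 1 := by
          rw [Multiset.coe_count]
          apply @List.count_eq_one_of_mem _ instBEqOfDecidableEq _
          · exact (List.nodup_finRange n).map fun a b h => congrArg Prod.fst h
          · exact List.mem_map.mpr ⟨b.1, List.mem_finRange _, hb2.symm⟩
        rw [h1]
        calc Multiset.count b (w.filter fun a => ¬(a.2 = V a.1)) ≤ Multiset.count b w :=
              Multiset.count_le_of_le _ (Multiset.filter_le _ w)
          _ ≤ 1 := by rw [hb2]; exact hcnt b.1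

lemma count_wClause {n : ℕ} (c : Clause n) (b : Sym n) :
    (wClause c).count b = ∑ j : Fin 3, if (((c j).1, !(c j).2) : Sym n) = b then 2 else 0 := by
  rw [wClause, Multiset.count_sum']
  apply Finset.sum_congr rfl
  intro j _
  rw [Multiset.count_replicate]

lemma wClause_mem_iff {n : ℕ} (hn : 0 < n) (V : Fin n → Bool) (c : Clause n) :
    wClause c ∈ (EV hn V).lang ↔ ¬ clauseSat V c := by
  rw [mem_EV]
  constructor
  · rintro ⟨hcnt, -⟩ ⟨j, hj⟩
    have h2 : 2 ≤ (wClause c).count ((c j).1, !V (c j).1) := by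
      rw [count_wClause]
      have : (if (((c j).1, !(c j).2) : Sym n) = ((c j).1, !V (c j).1) then 2 else 0) = 2 := by
        rw [if_pos]
        rw [Prod.mk.injEq]
        exact ⟨rfl, by rw [hj]⟩
      calc (2 : ℕ) = if (((c j).1, !(c j).2) : Sym n) = ((c j).1, !V (c j).1) then 2 else 0 :=
            this.symm
        _ ≤ _ := Finset.single_le_sum (f := fun j' =>
            if (((c j').1, !(c j').2) : Sym n) = ((c j).1, !V (c j).1) then 2 else 0)
            (fun _ _ => by positivity) (Finset.mem_univ j)
    have := hcnt (c j).1
    omega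
  · intro hsat
    have hlit : ∀ j : Fin 3, V (c j).1 = !(c j).2 := by
      intro j
      by_contra h
      exact hsat ⟨j, by cases hV : V (c j).1 <;> cases hc : (c j).2 <;> simp_all⟩
    constructor
    · intro i
      rw [count_wClause]
      have : ∀ j : Fin 3,
          (if (((c j).1, !(c j).2) : Sym n) = (i, !V i) then 2 else 0) = 0 := by
        intro j
        rw [if_neg]
        rw [Prod.mk.injEq]
        rintro ⟨rfl, hb⟩
        rw [hlit j] at hb
        simp at hb
      rw [Finset.sum_eq_zero fun j _ => this j]
      exact Nat.zero_le 1
    · refine ⟨((c 0).1, !(c 0).2), ?_, ?_⟩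
      · rw [wClause, Multiset.mem_sum]
        exact ⟨0, Finset.mem_univ _, by simp⟩
      · exact (hlit 0).symm

/-- A valuation `V` satisfies `φ` iff `E_V` is consistent with
the sample `D_φ` of the reduction. -/
theorem valuation_sat_iff_EV_consistent (n : ℕ) (hn : 0 < n)
    (φ : List (Clause n)) (V : Fin n → Bool) :
    (∀ c ∈ φ, clauseSat V c) ↔
    (wAll n ∈ (EV hn V).lang ∧ (∀ i : Fin n, wPair i ∈ (EV hn V).lang) ∧
     (0 : Multiset (Sym n)) ∉ (EV hn V).lang ∧
     (∀ i : Fin n, wTTFF i ∉ (EV hn V).lang) ∧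
     ∀ c ∈ φ, wClause c ∉ (EV hn V).lang) := by
  have hAll : wAll n ∈ (EV hn V).lang := by
    rw [mem_EV]
    constructor
    · intro i
      exact le_of_eq (Multiset.count_eq_one_of_mem Finset.univ.nodup (Finset.mem_univ _))
    · exact ⟨(⟨0, hn⟩, V ⟨0, hn⟩), Finset.mem_univ _, rfl⟩
  have hPair : ∀ i : Fin n, wPair i ∈ (EV hn V).lang := by
    intro i
    rw [mem_EV]
    constructor
    · intro j
      simp only [wPair, Multiset.insert_eq_cons, Multiset.count_cons, Multiset.count_singleton]
      split_ifs <;> simp_all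
    · exact ⟨(i, V i), by cases hV : V i <;> simp [wPair, hV], rfl⟩
  have h0 : (0 : Multiset (Sym n)) ∉ (EV hn V).lang := by
    rw [mem_EV]
    rintro ⟨-, a, ha, -⟩
    simp at ha
  have hTTFF : ∀ i : Fin n, wTTFF i ∉ (EV hn V).lang := by
    intro i h
    rw [mem_EV] at h
    have h2 : (wTTFF i).count (i, !V i) = 2 := by
      cases hV : V i <;>
        simp [wTTFF, Multiset.insert_eq_cons, Multiset.count_cons,
          Multiset.count_singleton, hV]
    have := h.1 i
    omega
  constructor
  · intro hφ
    refine ⟨hAll, hPair, h0, hTTFF, fun c hc h => ?_⟩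
    exact (wClause_mem_iff hn V c).mp h (hφ c hc)
  · rintro ⟨-, -, -, -, hneg⟩ c hc
    have := hneg c hc
    rw [wClause_mem_iff] at this
    exact not_not.mp this

end LSXML
end

section
/- For every n > 1, consider the alphabet Σ = {r, a₁, b₁, …, a_n, b_n} and the DMS S with root label r and rules r → a₁ ∥ b₁; a_i → a_{i+1} ∥ b_{i+1} and b_i → a_{i+1} ∥ b_{i+1} for 1 ≤ i < n; and a_n → ε, b_n → ε. Then L(S) contains exactly one tree, and that tree has exactly 2^{n+1} − 1 nodes; in particular the size of the smallest tree satisfying S is exponential in the size of the alphabet. -/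
namespace LSXML

/-- Number of nodes of a tree. -/
def UTree.size {α : Type} : UTree α → ℕ
  | .node _ ts => 1 + (ts.attach.map fun t => UTree.size t.1).sum
decreasing_by
  have := List.sizeOf_lt_of_mem t.2
  simp only [UTree.node.sizeOf_spec]
  omega

/-- Equality of trees as *unordered* trees: same root label and children lists
related, up to permutation, by pairing equivalent subtrees. -/
inductive TEquiv {α : Type} : UTree α → UTree α → Prop
  | node (a : α) (ts vs us : List (UTree α)) :
      List.Forall₂ TEquiv ts vs → vs.Perm us →
      TEquiv (UTree.node a ts) (UTree.node a us)

/-- The DME `a ∥ b` (for distinct symbols `a`, `b`). -/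
def pairDME {α : Type} (a b : α) (h : a ≠ b) : DME α where
  factors := [([(a, Mult.one)], Mult.one), ([(b, Mult.one)], Mult.one)]
  nonemptyDisj := by intro d hd; simp at hd; rcases hd with rfl | rfl <;> simp
  distinct := by simp [h]

/-- The DME with language `{ε}` (the rule `a → ε`). -/
def epsDME {α : Type} : DME α where
  factors := []
  nonemptyDisj := by simp
  distinct := by simp

/-- The alphabet `Σ = {r, a₁, b₁, …, a_n, b_n}` (0-indexed): `none` is `r` and
`some (i, true)`, `some (i, false)` are `a_{i+1}`, `b_{i+1}`. -/
abbrev ExpSym (n : ℕ) := Option (Fin n × Bool)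

/-- The DMS with rules `r → a₁ ∥ b₁`; `a_i → a_{i+1} ∥ b_{i+1}`,
`b_i → a_{i+1} ∥ b_{i+1}` for `1 ≤ i < n`; `a_n → ε`, `b_n → ε`. -/
def expDMS (n : ℕ) (hn : 1 < n) : DMS (ExpSym n) where
  root := none
  rules := fun x =>
    match x with
    | none =>
        pairDME (some (⟨0, by omega⟩, true)) (some (⟨0, by omega⟩, false)) (by simp)
    | some (i, _) =>
        if h : (i : ℕ) + 1 < n then
          pairDME (some (⟨(i : ℕ) + 1, h⟩, true)) (some (⟨(i : ℕ) + 1, h⟩, false))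
            (by simp)
        else epsDME

/-! ### Auxiliary material for Statement 11 -/

theorem UTree.size_node {α : Type} (a : α) (ts : List (UTree α)) :
    (UTree.node a ts).size = 1 + (ts.map UTree.size).sum := by
  rw [UTree.size, List.attach_map_val]

theorem pair_eq_pair {α : Type} {x y A B : α}
    (h : (x ::ₘ {y} : Multiset α) = A ::ₘ {B}) :
    (x = A ∧ y = B) ∨ (x = B ∧ y = A) := by
  rw [Multiset.cons_eq_cons] at h
  rcases h with ⟨rfl, h⟩ | ⟨hne, cs, h1, h2⟩
  · left; exact ⟨rfl, Multiset.singleton_inj.mp h⟩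
  · right
    simp [Multiset.singleton_eq_cons_iff] at h1 h2
    tauto

theorem mem_epsDME {α : Type} {w : Multiset α} :
    w ∈ (epsDME (α := α)).lang ↔ w = 0 := by
  simp [epsDME, DME.lang, concatLang]

theorem mem_pairDME {α : Type} {a b : α} (h : a ≠ b) {w : Multiset α} :
    w ∈ (pairDME a b h).lang ↔ w = a ::ₘ {b} := by
  constructor
  · rintro ⟨u, hu, v, ⟨u', hu', v', hv', rfl⟩, rfl⟩
    have hv' : v' = 0 := hv'
    subst hv'
    obtain ⟨ws, hlen, hmem, rfl⟩ := hu
    obtain ⟨ws', hlen', hmem', rfl⟩ := hu'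
    simp only [Mult.sem, Set.mem_singleton_iff] at hlen hlen'
    obtain ⟨u, rfl⟩ := List.length_eq_one_iff.mp hlen
    obtain ⟨u', rfl⟩ := List.length_eq_one_iff.mp hlen'
    have h1 := hmem u (by simp)
    have h2 := hmem' u' (by simp)
    obtain ⟨p, hp, i, hi, rfl⟩ := h1
    obtain ⟨p', hp', i', hi', rfl⟩ := h2
    simp only [pairDME, List.mem_singleton] at hp hp'
    subst hp; subst hp'
    simp only [Mult.sem, Set.mem_singleton_iff] at hi hi'
    subst hi; subst hi'
    simp [Multiset.replicate_one, Multiset.singleton_add]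
  · rintro rfl
    refine ⟨{a}, ?_, {b} + 0, ⟨{b}, ?_, 0, rfl, rfl⟩, ?_⟩
    · refine ⟨[{a}], by simp [Mult.sem], ?_, by simp⟩
      intro u hu; simp at hu; subst hu
      exact ⟨(a, Mult.one), by simp [pairDME], 1, by simp [Mult.sem], by simp⟩
    · refine ⟨[{b}], by simp [Mult.sem], ?_, by simp⟩
      intro u hu; simp at hu; subst hu
      exact ⟨(b, Mult.one), by simp [pairDME], 1, by simp [Mult.sem], by simp⟩
    · rw [add_zero, Multiset.singleton_add]

/-- The canonical subtree rooted at level `i` (0-indexed). -/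
def expSub (n : ℕ) : (i : ℕ) → i < n → Bool → UTree (ExpSym n)
  | i, hi, b =>
    if h : i + 1 < n then
      .node (some (⟨i, hi⟩, b)) [expSub n (i + 1) h true, expSub n (i + 1) h false]
    else .node (some (⟨i, hi⟩, b)) []
termination_by i => n - i

theorem expSub_label (n i : ℕ) (hi : i < n) (b : Bool) :
    (expSub n i hi b).label = some (⟨i, hi⟩, b) := by
  rw [expSub]; split <;> rfl

/-- The canonical tree associated to a symbol. -/
def expCanon (n : ℕ) (hn : 1 < n) : ExpSym n → UTree (ExpSym n)
  | none => .node none [expSub n 0 (by omega) true, expSub n 0 (by omega) false]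
  | some (i, b) => expSub n (i : ℕ) i.2 b

/-- Expected size of a tree whose root has the given label. -/
def expSize (n : ℕ) : ExpSym n → ℕ
  | none => 2 ^ (n + 1) - 1
  | some (i, _) => 2 ^ (n - (i : ℕ)) - 1

theorem expSize_none (n : ℕ) : expSize n none = 2 ^ (n + 1) - 1 := rfl

theorem expSize_some (n : ℕ) (i : Fin n) (b : Bool) :
    expSize n (some (i, b)) = 2 ^ (n - (i : ℕ)) - 1 := rfl

theorem expDMS_rules_none (n : ℕ) (hn : 1 < n) :
    (expDMS n hn).rules none =
      pairDME (some (⟨0, by omega⟩, true)) (some (⟨0, by omega⟩, false)) (by simp) := rfl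

theorem expDMS_rules_some (n : ℕ) (hn : 1 < n) (i : Fin n) (b : Bool) :
    (expDMS n hn).rules (some (i, b)) =
      if h : (i : ℕ) + 1 < n then
        pairDME (some (⟨(i : ℕ) + 1, h⟩, true)) (some (⟨(i : ℕ) + 1, h⟩, false))
          (by simp)
      else epsDME := rfl

theorem expSub_sat_aux (n : ℕ) (hn : 1 < n) :
    ∀ k i (hi : i < n), n - i ≤ k → ∀ b,
      UTree.Sat (expDMS n hn).rules (expSub n i hi b) := by
  intro k
  induction k with
  | zero => intro i hi hk; omega
  | succ k ih =>
    intro i hi hk b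
    rw [expSub]
    split
    case isTrue h =>
      refine UTree.Sat.node _ _ ?_ ?_
      · rw [expDMS_rules_some n hn ⟨i, hi⟩ b]
        simp only [h, dif_pos]
        rw [mem_pairDME]
        simp [expSub_label]
        rfl
      · rintro t ht
        simp only [List.mem_cons, List.mem_singleton, List.not_mem_nil, or_false] at ht
        rcases ht with rfl | rfl <;> exact ih (i + 1) h (by omega) _
    case isFalse h =>
      refine UTree.Sat.node _ _ ?_ (by simp)
      rw [expDMS_rules_some n hn ⟨i, hi⟩ b, dif_neg h, mem_epsDME]
      simp

theorem expSub_sat (n : ℕ) (hn : 1 < n) (i : ℕ) (hi : i < n) (b : Bool) :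
    UTree.Sat (expDMS n hn).rules (expSub n i hi b) :=
  expSub_sat_aux n hn (n - i) i hi le_rfl b

theorem expCanon_sat (n : ℕ) (hn : 1 < n) (x : ExpSym n) :
    UTree.Sat (expDMS n hn).rules (expCanon n hn x) := by
  match x with
  | some (i, b) => exact expSub_sat n hn i i.2 b
  | none =>
    refine UTree.Sat.node _ _ ?_ ?_
    · rw [expDMS_rules_none n hn, mem_pairDME]
      simp [expSub_label]
      rfl
    · rintro t ht
      simp only [expCanon, List.mem_cons, List.mem_singleton, List.not_mem_nil,
        or_false] at ht
      rcases ht with rfl | rfl <;> exact expSub_sat n hn 0 (by omega) _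

/-- Helper: extract the two children from a pair-language constraint. -/
theorem two_children {α : Type} {ts : List (UTree α)} {A B : α}
    (h : ((ts.map UTree.label : List α) : Multiset α) = A ::ₘ {B}) :
    ∃ t1 t2, ts = [t1, t2] ∧
      ((t1.label = A ∧ t2.label = B) ∨ (t1.label = B ∧ t2.label = A)) := by
  have hlen : ts.length = 2 := by
    have := congrArg Multiset.card h
    simpa using this
  match ts, hlen with
  | [t1, t2], _ =>
    refine ⟨t1, t2, rfl, ?_⟩
    exact pair_eq_pair (by simp only [List.map_cons, List.map_nil] at h; exact h)

theorem size_of_sat (n : ℕ) (hn : 1 < n) :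
    ∀ t : UTree (ExpSym n), UTree.Sat (expDMS n hn).rules t →
      t.size = expSize n t.label := by
  intro t hsat
  induction hsat with
  | node a ts hm _ ih =>
    match a with
    | none =>
      rw [expDMS_rules_none n hn, mem_pairDME] at hm
      obtain ⟨t1, t2, rfl, hcase⟩ := two_children hm
      have h1 := ih t1 (by simp)
      have h2 := ih t2 (by simp)
      have hpow : 1 ≤ 2 ^ n := Nat.one_le_two_pow
      rcases hcase with ⟨l1, l2⟩ | ⟨l1, l2⟩ <;>
        · rw [l1, expSize_some] at h1
          rw [l2, expSize_some] at h2
          simp only [Nat.sub_zero] at h1 h2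
          show _ = expSize n none
          rw [UTree.size_node, expSize_none, pow_succ]
          simp only [List.map_cons, List.map_nil, List.sum_cons, List.sum_nil, h1, h2]
          omega
    | some (i, b) =>
      rw [expDMS_rules_some n hn i b] at hm
      by_cases h : (i : ℕ) + 1 < n
      · rw [dif_pos h, mem_pairDME] at hm
        obtain ⟨t1, t2, rfl, hcase⟩ := two_children hm
        have h1 := ih t1 (by simp)
        have h2 := ih t2 (by simp)
        have e1 : 2 ^ (n - ((i : ℕ) + 1)) - 1 + (2 ^ (n - ((i : ℕ) + 1)) - 1) + 1
            = 2 ^ (n - (i : ℕ)) - 1 := by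
          have hni : n - (i : ℕ) = (n - ((i : ℕ) + 1)) + 1 := by omega
          have : 1 ≤ 2 ^ (n - ((i : ℕ) + 1)) := Nat.one_le_two_pow
          rw [hni, pow_succ]; omega
        rcases hcase with ⟨l1, l2⟩ | ⟨l1, l2⟩ <;>
          · rw [l1] at h1; rw [l2] at h2
            simp only [UTree.size_node, UTree.label, List.map_cons, List.map_nil,
              List.sum_cons, List.sum_nil, h1, h2, expSize_some, expSize_none]
            omega
      · rw [dif_neg h, mem_epsDME] at hm
        have : ts = [] := by simpa using hm
        subst this
        have hni : n - (i : ℕ) = 1 := by have := i.2; omega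
        simp [UTree.size_node, UTree.label, expSize_some, hni]

theorem equiv_canon (n : ℕ) (hn : 1 < n) :
    ∀ t : UTree (ExpSym n), UTree.Sat (expDMS n hn).rules t →
      TEquiv t (expCanon n hn t.label) := by
  intro t hsat
  induction hsat with
  | node a ts hm _ ih =>
    match a with
    | none =>
      rw [expDMS_rules_none n hn, mem_pairDME] at hm
      obtain ⟨t1, t2, rfl, hcase⟩ := two_children hm
      have h1 := ih t1 (by simp)
      have h2 := ih t2 (by simp)
      show TEquiv _ (expCanon n hn none)
      rcases hcase with ⟨l1, l2⟩ | ⟨l1, l2⟩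
      · rw [l1] at h1; rw [l2] at h2
        exact TEquiv.node none [t1, t2] _ _
          (List.Forall₂.cons h1 (List.Forall₂.cons h2 List.Forall₂.nil))
          (List.Perm.refl _)
      · rw [l1] at h1; rw [l2] at h2
        exact TEquiv.node none [t1, t2] _ _
          (List.Forall₂.cons h1 (List.Forall₂.cons h2 List.Forall₂.nil))
          (List.Perm.swap _ _ _)
    | some (i, b) =>
      rw [expDMS_rules_some n hn i b] at hm
      show TEquiv _ (expCanon n hn (some (i, b)))
      have hex : expCanon n hn (some (i, b)) = expSub n (i : ℕ) i.2 b := rfl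
      by_cases h : (i : ℕ) + 1 < n
      · rw [dif_pos h, mem_pairDME] at hm
        obtain ⟨t1, t2, rfl, hcase⟩ := two_children hm
        have h1 := ih t1 (by simp)
        have h2 := ih t2 (by simp)
        rw [hex, expSub]
        rw [dif_pos h]
        rcases hcase with ⟨l1, l2⟩ | ⟨l1, l2⟩
        · rw [l1] at h1; rw [l2] at h2
          exact TEquiv.node _ [t1, t2] _ _
            (List.Forall₂.cons h1 (List.Forall₂.cons h2 List.Forall₂.nil))
            (List.Perm.refl _)
        · rw [l1] at h1; rw [l2] at h2
          exact TEquiv.node _ [t1, t2] _ _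
            (List.Forall₂.cons h1 (List.Forall₂.cons h2 List.Forall₂.nil))
            (List.Perm.swap _ _ _)
      · rw [dif_neg h, mem_epsDME] at hm
        have : ts = [] := by simpa using hm
        subst this
        rw [hex, expSub, dif_neg h]
        exact TEquiv.node _ [] [] [] List.Forall₂.nil (List.Perm.refl _)

/-- The language of the schema `expDMS n` contains exactly one
tree (as an unordered tree, i.e. up to `TEquiv`), and that tree has exactly
`2 ^ (n + 1) - 1` nodes — exponentially many in the size `2 * n + 1` of the
alphabet. -/
theorem expDMS_unique_exponential_tree (n : ℕ) (hn : 1 < n) :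
    ∃ t : UTree (ExpSym n), t ∈ (expDMS n hn).lang ∧
      (∀ t' ∈ (expDMS n hn).lang, TEquiv t' t) ∧
      UTree.size t = 2 ^ (n + 1) - 1 ∧
      ∀ t' ∈ (expDMS n hn).lang, UTree.size t' = 2 ^ (n + 1) - 1 := by
  refine ⟨expCanon n hn none, ⟨rfl, expCanon_sat n hn none⟩, ?_, ?_, ?_⟩
  · rintro t' ⟨hl, hs⟩
    have := equiv_canon n hn t' hs
    rwa [hl] at this
  · have := size_of_sat n hn _ (expCanon_sat n hn none)
    exact this
  · rintro t' ⟨hl, hs⟩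
    have := size_of_sat n hn t' hs
    rw [hl] at this
    exact this

end LSXML
end
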